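/- arXiv:2312.11105 — 4 statements merged into one kernel-verified Lean document; each statement's English description precedes it below -/
import Mathlib

section
/- Fix an integer k ≥ 2, β ∈ (0,1], and a sequence (x_n) in [0,1). If for all s_1,...,s_{k-1} > 0 the iterated integral ∫_0^{s_1}⋯∫_0^{s_{k-1}} R_{k,β}(σ_1,...,σ_{k-1},N) dσ_{k-1}⋯dσ_1 converges to ∏_{i=1}^{k-1} s_i^2 as N → ∞, then R_{k,β}(s_1,...,s_{k-1},N) → ∏_{i=1}^{k-1} 2 s_i as N → ∞ for all s_1,...,s_{k-1} > 0. -/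
open MeasureTheory Filter
open scoped Classical

/-- Distance of a real number to the nearest integer. -/
noncomputable def nid (x : ℝ) : ℝ := |x - round x|

/-- The correlation counting statistic `R_{k,β}(s_1,…,s_{k-1},N)` with `k = m+1`:
`N^{-(k-(k-1)β)}` times the number of tuples of distinct indices `(i_1,…,i_k)` in `{1,…,N}`
with `‖x_{i_l} - x_{i_k}‖ ≤ s_l / N^β` for all `1 ≤ l ≤ k-1`. -/
noncomputable def Rcorr (x : ℕ → ℝ) (m : ℕ) (β : ℝ) (s : Fin m → ℝ) (N : ℕ) : ℝ :=
  ((Finset.univ.filter (fun i : Fin (m + 1) → Fin N =>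
      Function.Injective i ∧
        ∀ l : Fin m, nid (x (i l.castSucc) - x (i (Fin.last m))) ≤ s l / (N : ℝ) ^ β)).card : ℝ)
    / (N : ℝ) ^ ((m + 1 : ℝ) - m * β)

/-! ### Auxiliary lemmas -/

lemma prod_sub_expand {m : ℕ} (g h : Fin m → ℝ) :
    ∏ i, (g i - h i) = ∑ S ∈ (Finset.univ : Finset (Fin m)).powerset,
      (-1 : ℝ) ^ S.card * ∏ i, (if i ∈ S then h i else g i) := by
  have : ∀ i, g i - h i = (-h i) + g i := fun i => by ring
  simp only [this]
  rw [Finset.prod_add]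
  refine Finset.sum_congr rfl fun S _ => ?_
  have h1 : ∏ i ∈ S, -h i = (-1 : ℝ) ^ S.card * ∏ i ∈ S, h i := by
    rw [show (fun i => -h i) = fun i => (-1) * h i from funext fun i => by ring,
      Finset.prod_mul_distrib, Finset.prod_const]
  have h2 : ∏ i, (if i ∈ S then h i else g i)
      = (∏ i ∈ S, h i) * ∏ i ∈ Finset.univ \ S, g i := by
    rw [Finset.prod_ite]
    congr 1
    · congr 1
      simp [Finset.filter_mem_eq_inter]
    · congr 1
      ext i; simp
  rw [h1, h2]; ring

lemma Rcorr_nonneg (x : ℕ → ℝ) (m : ℕ) (β : ℝ) (s : Fin m → ℝ) (N : ℕ) :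
    0 ≤ Rcorr x m β s N :=
  div_nonneg (Nat.cast_nonneg _) (Real.rpow_nonneg (Nat.cast_nonneg _) _)

lemma Rcorr_mono (x : ℕ → ℝ) (m : ℕ) (β : ℝ) {s t : Fin m → ℝ} (hst : ∀ i, s i ≤ t i)
    (N : ℕ) : Rcorr x m β s N ≤ Rcorr x m β t N := by
  unfold Rcorr
  rw [div_eq_mul_inv, div_eq_mul_inv]
  refine mul_le_mul_of_nonneg_right ?_ (inv_nonneg.2 (Real.rpow_nonneg (Nat.cast_nonneg _) _))
  have : ∀ a b : ℝ, a ≤ b → a / (N : ℝ) ^ β ≤ b / (N : ℝ) ^ β := by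
    intro a b hab
    rw [div_eq_mul_inv, div_eq_mul_inv]
    exact mul_le_mul_of_nonneg_right hab (inv_nonneg.2 (Real.rpow_nonneg (Nat.cast_nonneg _) _))
  have hsub : Finset.card (Finset.filter
        (fun i : Fin (m+1) → Fin N => Function.Injective i ∧ ∀ (l : Fin m), nid (x ↑(i l.castSucc) - x ↑(i (Fin.last m))) ≤ s l / ↑N ^ β)
        Finset.univ) ≤ Finset.card (Finset.filter
        (fun i : Fin (m+1) → Fin N => Function.Injective i ∧ ∀ (l : Fin m), nid (x ↑(i l.castSucc) - x ↑(i (Fin.last m))) ≤ t l / ↑N ^ β)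
        Finset.univ) := by
    refine Finset.card_le_card (Finset.monotone_filter_right _ ?_)
    intro i _ hi
    exact ⟨hi.1, fun l => (hi.2 l).trans (this _ _ (hst l))⟩
  exact_mod_cast hsub

lemma Rcorr_measurable (x : ℕ → ℝ) (m : ℕ) (β : ℝ) (N : ℕ) :
    Measurable (fun σ : Fin m → ℝ => Rcorr x m β σ N) := by
  unfold Rcorr
  apply Measurable.div_const
  have : (fun σ : Fin m → ℝ => ((Finset.univ.filter (fun i : Fin (m + 1) → Fin N =>
      Function.Injective i ∧
        ∀ l : Fin m, nid (x (i l.castSucc) - x (i (Fin.last m))) ≤ σ l / (N : ℝ) ^ β)).card : ℝ))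
      = fun σ => ∑ i : Fin (m + 1) → Fin N, if (Function.Injective i ∧
        ∀ l : Fin m, nid (x (i l.castSucc) - x (i (Fin.last m))) ≤ σ l / (N : ℝ) ^ β)
        then (1 : ℝ) else 0 := by
    funext σ
    rw [Finset.card_filter]
    push_cast
    rfl
  rw [this]
  refine Finset.measurable_sum _ fun i _ => ?_
  refine Measurable.ite ?_ measurable_const measurable_const
  have : {σ : Fin m → ℝ | Function.Injective i ∧
      ∀ l : Fin m, nid (x (i l.castSucc) - x (i (Fin.last m))) ≤ σ l / (N : ℝ) ^ β}
      = {σ : Fin m → ℝ | Function.Injective i} ∩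
        ⋂ l : Fin m, {σ : Fin m → ℝ | nid (x (i l.castSucc) - x (i (Fin.last m))) ≤ σ l / (N : ℝ) ^ β} := by
    ext σ; simp [Set.mem_iInter]
  rw [this]
  refine MeasurableSet.inter (MeasurableSet.const _) (MeasurableSet.iInter fun l => ?_)
  exact measurableSet_le measurable_const ((measurable_pi_apply l).div_const _)

lemma Rcorr_bounded (x : ℕ → ℝ) (m : ℕ) (β : ℝ) (N : ℕ) :
    ∃ C : ℝ, ∀ σ : Fin m → ℝ, |Rcorr x m β σ N| ≤ C := by
  refine ⟨(Fintype.card (Fin (m + 1) → Fin N) : ℝ) / (N : ℝ) ^ ((m + 1 : ℝ) - m * β), fun σ => ?_⟩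
  rw [abs_of_nonneg (Rcorr_nonneg x m β σ N)]
  unfold Rcorr
  rw [div_eq_mul_inv, div_eq_mul_inv]
  refine mul_le_mul_of_nonneg_right ?_ (inv_nonneg.2 (Real.rpow_nonneg (Nat.cast_nonneg _) _))
  exact_mod_cast Nat.cast_le.2 ((Finset.card_filter_le _ _).trans (le_of_eq Finset.card_univ))

lemma boxIcc_meas {m : ℕ} (c : Fin m → ℝ) :
    MeasurableSet (Set.univ.pi fun i => Set.Icc (0:ℝ) (c i)) :=
  MeasurableSet.pi Set.countable_univ fun _ _ => measurableSet_Icc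

lemma boxIoc_meas {m : ℕ} (a b : Fin m → ℝ) :
    MeasurableSet (Set.univ.pi fun i => Set.Ioc (a i) (b i)) :=
  MeasurableSet.pi Set.countable_univ fun _ _ => measurableSet_Ioc

lemma box_volume_lt_top {m : ℕ} (c : Fin m → ℝ) :
    volume (Set.univ.pi fun i => Set.Icc (0:ℝ) (c i)) < ⊤ := by
  rw [volume_pi_pi]
  exact ENNReal.prod_lt_top fun i _ =>
    (by simp [Real.volume_Icc] : volume (Set.Icc (0:ℝ) (c i)) ≠ ⊤).lt_top

lemma boxIoc_volume_lt_top {m : ℕ} (a b : Fin m → ℝ) :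
    volume (Set.univ.pi fun i => Set.Ioc (a i) (b i)) < ⊤ := by
  rw [volume_pi_pi]
  exact ENNReal.prod_lt_top fun i _ =>
    (by simp [Real.volume_Ioc] : volume (Set.Ioc (a i) (b i)) ≠ ⊤).lt_top

lemma boxIoc_volume {m : ℕ} (a b : Fin m → ℝ) (hab : ∀ i, a i ≤ b i) :
    (volume (Set.univ.pi fun i => Set.Ioc (a i) (b i))).toReal = ∏ i, (b i - a i) := by
  rw [volume_pi_pi]
  simp only [Real.volume_Ioc]
  rw [ENNReal.toReal_prod]
  exact Finset.prod_congr rfl fun i _ => ENNReal.toReal_ofReal (by linarith [hab i])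

lemma integrableOn_of_bounded {m : ℕ} {f : (Fin m → ℝ) → ℝ} (hf : Measurable f) {C : ℝ}
    (hC : ∀ σ, |f σ| ≤ C) {A : Set (Fin m → ℝ)} (_hA : MeasurableSet A)
    (hfin : volume A < ⊤) : IntegrableOn f A := by
  have : IntegrableOn (fun _ : Fin m → ℝ => C) A := by
    exact integrableOn_const hfin.ne
  exact Integrable.mono' this hf.aestronglyMeasurable.restrict
    (Filter.Eventually.of_forall fun σ => (Real.norm_eq_abs _ ▸ hC σ))

/-- Inclusion–exclusion for integrals over half-open boxes. -/
lemma incl_excl {m : ℕ} (f : (Fin m → ℝ) → ℝ) (hfm : Measurable f) {C : ℝ}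
    (hC : ∀ σ, |f σ| ≤ C) (a b : Fin m → ℝ) (ha : ∀ i, 0 ≤ a i) (hab : ∀ i, a i ≤ b i) :
    ∫ σ in Set.univ.pi fun i => Set.Ioc (a i) (b i), f σ =
      ∑ S ∈ (Finset.univ : Finset (Fin m)).powerset,
        (-1 : ℝ) ^ S.card *
          ∫ σ in Set.univ.pi fun i => Set.Icc (0:ℝ) (if i ∈ S then a i else b i), f σ := by
  have key : ∀ σ : Fin m → ℝ,
      (Set.univ.pi fun i => Set.Ioc (a i) (b i)).indicator f σ =
      ∑ S ∈ (Finset.univ : Finset (Fin m)).powerset,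
        (-1 : ℝ) ^ S.card *
          (Set.univ.pi fun i => Set.Icc (0:ℝ) (if i ∈ S then a i else b i)).indicator f σ := by
    intro σ
    have ind_eq : ∀ (A : Set (Fin m → ℝ)), A.indicator f σ = (if σ ∈ A then (1:ℝ) else 0) * f σ := by
      intro A
      by_cases hσ : σ ∈ A <;> simp [hσ]
    simp only [ind_eq]
    have lhs1 : (if σ ∈ (Set.univ.pi fun i => Set.Ioc (a i) (b i)) then (1:ℝ) else 0)
        = ∏ i, (if σ i ∈ Set.Ioc (a i) (b i) then (1:ℝ) else 0) := by
      rw [Finset.prod_boole]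
      simp [Set.mem_univ_pi]
    have coord : ∀ i, (if σ i ∈ Set.Ioc (a i) (b i) then (1:ℝ) else 0)
        = (if σ i ∈ Set.Icc (0:ℝ) (b i) then (1:ℝ) else 0)
          - (if σ i ∈ Set.Icc (0:ℝ) (a i) then (1:ℝ) else 0) := by
      intro i
      simp only [Set.mem_Ioc, Set.mem_Icc]
      rcases le_or_gt (σ i) (a i) with hai | hai
      · rw [if_neg (fun hc : a i < σ i ∧ σ i ≤ b i => absurd hc.1 (not_lt.2 hai))]
        rcases le_or_gt 0 (σ i) with h0 | h0
        · rw [if_pos ⟨h0, hai.trans (hab i)⟩, if_pos ⟨h0, hai⟩]; ring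
        · rw [if_neg (fun hc : 0 ≤ σ i ∧ σ i ≤ b i => absurd hc.1 (not_le.2 h0)),
            if_neg (fun hc : 0 ≤ σ i ∧ σ i ≤ a i => absurd hc.1 (not_le.2 h0))]; ring
      · have h0 : 0 ≤ σ i := (ha i).trans hai.le
        rw [if_neg (fun hc : 0 ≤ σ i ∧ σ i ≤ a i => absurd hc.2 (not_le.2 hai))]
        rcases le_or_gt (σ i) (b i) with hb | hb
        · rw [if_pos ⟨hai, hb⟩, if_pos ⟨h0, hb⟩]; ring
        · rw [if_neg (fun hc : a i < σ i ∧ σ i ≤ b i => absurd hc.2 (not_le.2 hb)),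
            if_neg (fun hc : 0 ≤ σ i ∧ σ i ≤ b i => absurd hc.2 (not_le.2 hb))]; ring
    rw [lhs1]
    simp only [coord]
    rw [prod_sub_expand (fun i => if σ i ∈ Set.Icc (0:ℝ) (b i) then (1:ℝ) else 0)
      (fun i => if σ i ∈ Set.Icc (0:ℝ) (a i) then (1:ℝ) else 0), Finset.sum_mul]
    refine Finset.sum_congr rfl fun S _ => ?_
    rw [mul_assoc]
    congr 1
    congr 1
    have hmem : (if σ ∈ Set.univ.pi (fun i => Set.Icc (0:ℝ) (if i ∈ S then a i else b i))
        then (1:ℝ) else 0)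
        = ∏ i, if σ i ∈ Set.Icc (0:ℝ) (if i ∈ S then a i else b i) then (1:ℝ) else 0 := by
      rw [Finset.prod_boole]
      simp [Set.mem_univ_pi, Set.mem_Icc, Pi.le_def, forall_and]
    rw [hmem]
    refine Finset.prod_congr rfl fun i _ => ?_
    by_cases hi : i ∈ S <;> simp [hi]
  have integ : ∀ S : Finset (Fin m),
      Integrable (fun σ => (-1 : ℝ) ^ S.card *
        (Set.univ.pi fun i => Set.Icc (0:ℝ) (if i ∈ S then a i else b i)).indicator f σ) := by
    intro S
    refine Integrable.const_mul ?_ _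
    exact (integrable_indicator_iff (boxIcc_meas _)).2
      (integrableOn_of_bounded hfm hC (boxIcc_meas _) (box_volume_lt_top _))
  calc ∫ σ in Set.univ.pi fun i => Set.Ioc (a i) (b i), f σ
      = ∫ σ, (Set.univ.pi fun i => Set.Ioc (a i) (b i)).indicator f σ :=
        (integral_indicator (boxIoc_meas a b)).symm
    _ = ∫ σ, ∑ S ∈ (Finset.univ : Finset (Fin m)).powerset, (-1 : ℝ) ^ S.card *
          (Set.univ.pi fun i => Set.Icc (0:ℝ) (if i ∈ S then a i else b i)).indicator f σ := by
        simp only [key]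
    _ = ∑ S ∈ (Finset.univ : Finset (Fin m)).powerset, ∫ σ, (-1 : ℝ) ^ S.card *
          (Set.univ.pi fun i => Set.Icc (0:ℝ) (if i ∈ S then a i else b i)).indicator f σ :=
        integral_finset_sum _ fun S _ => integ S
    _ = ∑ S ∈ (Finset.univ : Finset (Fin m)).powerset, (-1 : ℝ) ^ S.card *
          ∫ σ in Set.univ.pi fun i => Set.Icc (0:ℝ) (if i ∈ S then a i else b i), f σ := by
        refine Finset.sum_congr rfl fun S _ => ?_
        rw [integral_const_mul, integral_indicator (boxIcc_meas _)]

/-- Lower bound for the integral of a coordinatewise-monotone bounded function over a box. -/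
lemma box_integral_lower {m : ℕ} (f : (Fin m → ℝ) → ℝ) (hfm : Measurable f) {C : ℝ}
    (hC : ∀ σ, |f σ| ≤ C) (hmono : ∀ u v : Fin m → ℝ, (∀ i, u i ≤ v i) → f u ≤ f v)
    (a b : Fin m → ℝ) (hab : ∀ i, a i ≤ b i) :
    f a * ∏ i, (b i - a i) ≤ ∫ σ in Set.univ.pi fun i => Set.Ioc (a i) (b i), f σ := by
  have hint : IntegrableOn f (Set.univ.pi fun i => Set.Ioc (a i) (b i)) :=
    integrableOn_of_bounded hfm hC (boxIoc_meas a b) (boxIoc_volume_lt_top a b)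
  have h1 : ∫ _σ in Set.univ.pi fun i => Set.Ioc (a i) (b i), f a = f a * ∏ i, (b i - a i) := by
    rw [setIntegral_const, smul_eq_mul, measureReal_def, boxIoc_volume a b hab, mul_comm]
  rw [← h1]
  refine setIntegral_mono_on (integrableOn_const (boxIoc_volume_lt_top a b).ne) hint
    (boxIoc_meas a b) fun σ hσ => ?_
  exact hmono a σ fun i => ((Set.mem_univ_pi.1 hσ) i).1.le

/-- Upper bound for the integral of a coordinatewise-monotone bounded function over a box. -/
lemma box_integral_upper {m : ℕ} (f : (Fin m → ℝ) → ℝ) (hfm : Measurable f) {C : ℝ}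
    (hC : ∀ σ, |f σ| ≤ C) (hmono : ∀ u v : Fin m → ℝ, (∀ i, u i ≤ v i) → f u ≤ f v)
    (a b : Fin m → ℝ) (hab : ∀ i, a i ≤ b i) :
    (∫ σ in Set.univ.pi fun i => Set.Ioc (a i) (b i), f σ) ≤ f b * ∏ i, (b i - a i) := by
  have hint : IntegrableOn f (Set.univ.pi fun i => Set.Ioc (a i) (b i)) :=
    integrableOn_of_bounded hfm hC (boxIoc_meas a b) (boxIoc_volume_lt_top a b)
  have h1 : ∫ _σ in Set.univ.pi fun i => Set.Ioc (a i) (b i), f b = f b * ∏ i, (b i - a i) := by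
    rw [setIntegral_const, smul_eq_mul, measureReal_def, boxIoc_volume a b hab, mul_comm]
  rw [← h1]
  refine setIntegral_mono_on hint (integrableOn_const (boxIoc_volume_lt_top a b).ne)
    (boxIoc_meas a b) fun σ hσ => ?_
  exact hmono σ b fun i => ((Set.mem_univ_pi.1 hσ) i).2

/-- if the iterated integral `∫_0^{s_1}⋯∫_0^{s_{k-1}} R_{k,β}(σ,N) dσ`
converges to `∏ s_i²` for all positive `s`, then `R_{k,β}(s,N) → ∏ 2 s_i` for all positive `s`. -/
theorem stmt3 (x : ℕ → ℝ) (hx : ∀ n, x n ∈ Set.Ico (0 : ℝ) 1) (m : ℕ) (hm : 1 ≤ m)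
    (β : ℝ) (hβ : 0 < β) (hβ1 : β ≤ 1)
    (h : ∀ s : Fin m → ℝ, (∀ i, 0 < s i) →
      Tendsto (fun N => ∫ σ in Set.univ.pi fun i => Set.Icc (0 : ℝ) (s i), Rcorr x m β σ N)
        atTop (nhds (∏ i, (s i) ^ 2))) :
    ∀ s : Fin m → ℝ, (∀ i, 0 < s i) →
      Tendsto (fun N => Rcorr x m β s N) atTop (nhds (∏ i, 2 * s i)) := by
  -- convergence of integrals over boxes (a, b]
  have hbox : ∀ a b : Fin m → ℝ, (∀ i, 0 < a i) → (∀ i, a i ≤ b i) →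
      Tendsto (fun N => ∫ σ in Set.univ.pi fun i => Set.Ioc (a i) (b i), Rcorr x m β σ N)
        atTop (nhds (∏ i, ((b i) ^ 2 - (a i) ^ 2))) := by
    intro a b ha hab
    have hie : ∀ N, (∫ σ in Set.univ.pi fun i => Set.Ioc (a i) (b i), Rcorr x m β σ N)
        = ∑ S ∈ (Finset.univ : Finset (Fin m)).powerset, (-1 : ℝ) ^ S.card *
            ∫ σ in Set.univ.pi fun i => Set.Icc (0:ℝ) (if i ∈ S then a i else b i),
              Rcorr x m β σ N := by
      intro N
      obtain ⟨C, hC⟩ := Rcorr_bounded x m β N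
      exact incl_excl _ (Rcorr_measurable x m β N) hC a b (fun i => (ha i).le) hab
    have hsum : ∏ i, ((b i) ^ 2 - (a i) ^ 2)
        = ∑ S ∈ (Finset.univ : Finset (Fin m)).powerset, (-1 : ℝ) ^ S.card *
            ∏ i, ((if i ∈ S then a i else b i) ^ 2) := by
      rw [prod_sub_expand (fun i => (b i) ^ 2) (fun i => (a i) ^ 2)]
      refine Finset.sum_congr rfl fun S _ => ?_
      congr 1
      exact Finset.prod_congr rfl fun i _ => by by_cases hi : i ∈ S <;> simp [hi]
    simp only [hie, hsum]
    refine tendsto_finset_sum _ fun S _ => ?_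
    refine Tendsto.const_mul _ (h _ fun i => ?_)
    by_cases hi : i ∈ S <;> simp [hi, ha i, lt_of_lt_of_le (ha i) (hab i)]
  intro s hs
  refine tendsto_order.2 ⟨fun c hc => ?_, fun c hc => ?_⟩
  · -- lower bound : c < ∏ 2 s i
    -- pick ε > 0 with ε < s i for all i and c < ∏ (2 s i - ε)
    have hne : (Finset.univ : Finset (Fin m)).Nonempty := by
      refine Finset.univ_nonempty_iff.2 ?_
      exact Fin.pos_iff_nonempty.1 hm
    set smin := Finset.univ.inf' hne s with hsmin
    have hsminpos : 0 < smin := (Finset.lt_inf'_iff hne).2 fun i _ => hs i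
    have hG : Continuous fun ε : ℝ => ∏ i, (2 * s i - ε) :=
      continuous_finset_prod _ fun i _ => (continuous_const.sub continuous_id)
    have hG0 : (∏ i, (2 * s i - (0:ℝ))) = ∏ i, 2 * s i := by simp
    have hev1 : ∀ᶠ ε in nhdsWithin (0:ℝ) (Set.Ioi 0), c < ∏ i, (2 * s i - ε) := by
      have : Tendsto (fun ε : ℝ => ∏ i, (2 * s i - ε)) (nhdsWithin 0 (Set.Ioi 0))
          (nhds (∏ i, 2 * s i)) := by
        have h2 := (hG.tendsto 0).mono_left
          (nhdsWithin_le_nhds (s := Set.Ioi (0:ℝ)))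
        rwa [hG0] at h2
      exact this.eventually_const_lt hc
    have hev2 : ∀ᶠ ε in nhdsWithin (0:ℝ) (Set.Ioi 0), ε < smin := by
      have : Tendsto (fun ε : ℝ => ε) (nhdsWithin 0 (Set.Ioi 0)) (nhds 0) :=
        tendsto_id.mono_left nhdsWithin_le_nhds
      exact this.eventually_lt_const hsminpos
    have hev3 : ∀ᶠ ε in nhdsWithin (0:ℝ) (Set.Ioi 0), ε ∈ Set.Ioi (0:ℝ) :=
      eventually_mem_nhdsWithin
    obtain ⟨ε, ⟨⟨hεG, hεs⟩, hεpos⟩⟩ := ((hev1.and hev2).and hev3).exists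
    rw [Set.mem_Ioi] at hεpos
    have hεlt : ∀ i, ε < s i := fun i => lt_of_lt_of_le hεs (Finset.inf'_le _ (Finset.mem_univ i))
    set a : Fin m → ℝ := fun i => s i - ε with hadef
    have hapos : ∀ i, 0 < a i := fun i => by simp [hadef]; linarith [hεlt i]
    have hab : ∀ i, a i ≤ s i := fun i => by simp [hadef]; linarith
    have hlim := hbox a s hapos hab
    have hprod : (∏ i, ((s i) ^ 2 - (a i) ^ 2)) = ε ^ m * ∏ i, (2 * s i - ε) := by
      rw [show (ε : ℝ) ^ m = ∏ _i : Fin m, ε by simp, ← Finset.prod_mul_distrib]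
      exact Finset.prod_congr rfl fun i _ => by simp [hadef]; ring
    have hclt : c * ε ^ m < ∏ i, ((s i) ^ 2 - (a i) ^ 2) := by
      rw [hprod]
      have hεm : (0:ℝ) < ε ^ m := pow_pos hεpos m
      calc c * ε ^ m < (∏ i, (2 * s i - ε)) * ε ^ m := by
            exact mul_lt_mul_of_pos_right hεG hεm
        _ = ε ^ m * ∏ i, (2 * s i - ε) := by ring
    have hev := hlim.eventually_const_lt hclt
    filter_upwards [hev] with N hN
    -- c * ε^m < ∫ ≤ Rcorr s N * ε^m
    obtain ⟨C, hC⟩ := Rcorr_bounded x m β N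
    have hup : (∫ σ in Set.univ.pi fun i => Set.Ioc (a i) (s i), Rcorr x m β σ N)
        ≤ Rcorr x m β s N * ∏ i, (s i - a i) := by
      exact box_integral_upper _ (Rcorr_measurable x m β N) hC
        (fun u v huv => Rcorr_mono x m β huv N) a s hab
    have hprod2 : (∏ i, (s i - a i)) = ε ^ m := by
      rw [show (ε : ℝ) ^ m = ∏ _i : Fin m, ε by simp]
      exact Finset.prod_congr rfl fun i _ => by simp [hadef]
    rw [hprod2] at hup
    have hεm : (0:ℝ) < ε ^ m := pow_pos hεpos m
    have : c * ε ^ m < Rcorr x m β s N * ε ^ m := lt_of_lt_of_le hN hup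
    exact lt_of_mul_lt_mul_right this hεm.le
  · -- upper bound : ∏ 2 s i < c
    have hG : Continuous fun ε : ℝ => ∏ i, (2 * s i + ε) :=
      continuous_finset_prod _ fun i _ => (continuous_const.add continuous_id)
    have hG0 : (∏ i, (2 * s i + (0:ℝ))) = ∏ i, 2 * s i := by simp
    have hev1 : ∀ᶠ ε in nhdsWithin (0:ℝ) (Set.Ioi 0), (∏ i, (2 * s i + ε)) < c := by
      have : Tendsto (fun ε : ℝ => ∏ i, (2 * s i + ε)) (nhdsWithin 0 (Set.Ioi 0))
          (nhds (∏ i, 2 * s i)) := by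
        have h2 := (hG.tendsto 0).mono_left
          (nhdsWithin_le_nhds (s := Set.Ioi (0:ℝ)))
        rwa [hG0] at h2
      exact this.eventually_lt_const hc
    have hev3 : ∀ᶠ ε in nhdsWithin (0:ℝ) (Set.Ioi 0), ε ∈ Set.Ioi (0:ℝ) :=
      eventually_mem_nhdsWithin
    obtain ⟨ε, hεG, hεpos⟩ := (hev1.and hev3).exists
    rw [Set.mem_Ioi] at hεpos
    set b : Fin m → ℝ := fun i => s i + ε with hbdef
    have hab : ∀ i, s i ≤ b i := fun i => by simp [hbdef]; linarith
    have hlim := hbox s b hs hab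
    have hprod : (∏ i, ((b i) ^ 2 - (s i) ^ 2)) = ε ^ m * ∏ i, (2 * s i + ε) := by
      rw [show (ε : ℝ) ^ m = ∏ _i : Fin m, ε by simp, ← Finset.prod_mul_distrib]
      exact Finset.prod_congr rfl fun i _ => by simp [hbdef]; ring
    have hclt : (∏ i, ((b i) ^ 2 - (s i) ^ 2)) < c * ε ^ m := by
      rw [hprod]
      have hεm : (0:ℝ) < ε ^ m := pow_pos hεpos m
      calc ε ^ m * ∏ i, (2 * s i + ε) = (∏ i, (2 * s i + ε)) * ε ^ m := by ring
        _ < c * ε ^ m := mul_lt_mul_of_pos_right hεG hεm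
    have hev := hlim.eventually_lt_const hclt
    filter_upwards [hev] with N hN
    obtain ⟨C, hC⟩ := Rcorr_bounded x m β N
    have hlo : Rcorr x m β s N * ∏ i, (b i - s i)
        ≤ ∫ σ in Set.univ.pi fun i => Set.Ioc (s i) (b i), Rcorr x m β σ N :=
      box_integral_lower _ (Rcorr_measurable x m β N) hC
        (fun u v huv => Rcorr_mono x m β huv N) s b hab
    have hprod2 : (∏ i, (b i - s i)) = ε ^ m := by
      rw [show (ε : ℝ) ^ m = ∏ _i : Fin m, ε by simp]
      exact Finset.prod_congr rfl fun i _ => by simp [hbdef]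
    rw [hprod2] at hlo
    have hεm : (0:ℝ) < ε ^ m := pow_pos hεpos m
    have : Rcorr x m β s N * ε ^ m < c * ε ^ m := lt_of_le_of_lt hlo hN
    exact lt_of_mul_lt_mul_right this hεm.le
end

section
/- Let (x_n) be a sequence in [0,1), k = 2, β ∈ (0,1], and s > 0. Then ∫_0^1 G_β(s,t,N) · H_β(s,t,N) dt = N^{-(2-β)} ∑_{1 ≤ i ≠ j ≤ N} s·max(0, 1 - N^β ‖x_i - x_j‖ / s) + s·N^{-(1-β)}, for all N with s/N^β ≤ 1/2. -/
open MeasureTheory Filter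
open scoped Classical

lemma nid_nonneg (x : ℝ) : 0 ≤ nid x := abs_nonneg _

lemma nid_le (x : ℝ) (m : ℤ) : nid x ≤ |x - m| := by
  rcases eq_or_ne (round x) m with h | h
  · rw [nid, h]
  · have h1 : |x - (round x : ℝ)| ≤ 1 / 2 := abs_sub_round x
    have h2 : (1 : ℝ) ≤ |((m - round x : ℤ) : ℝ)| := by
      exact_mod_cast Int.one_le_abs (sub_ne_zero.2 (Ne.symm h))
    have h3 : |((m - round x : ℤ) : ℝ)| ≤ |x - (round x : ℝ)| + |x - (m : ℝ)| := by
      have : ((m - round x : ℤ) : ℝ) = (x - (round x : ℝ)) - (x - (m : ℝ)) := by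
        push_cast; ring
      rw [this]
      exact abs_sub (x - (round x : ℝ)) (x - (m : ℝ))
    rw [nid]; linarith

lemma nid_le_abs (x : ℝ) : nid x ≤ |x| := by simpa using nid_le x 0

lemma nid_eq_abs {x : ℝ} (h : |x| ≤ 1 / 2) : nid x = |x| := by
  rcases eq_or_ne (round x) 0 with h0 | h0
  · rw [nid, h0]; simp
  · have h1 := nid_le_abs x
    have h2 : (1 : ℝ) ≤ |((round x : ℤ) : ℝ)| := by exact_mod_cast Int.one_le_abs h0
    have h3 : |((round x : ℤ) : ℝ)| ≤ |x| + |x - (round x : ℝ)| := by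
      have t := abs_sub x (x - (round x : ℝ))
      have e : x - (x - (round x : ℝ)) = ((round x : ℤ) : ℝ) := by push_cast; ring
      rwa [e] at t
    have h4 : |x| ≤ nid x := by rw [nid]; linarith
    linarith

lemma nid_add_int (x : ℝ) (m : ℤ) : nid (x + m) = nid x := by
  rw [nid, nid, round_add_intCast]
  push_cast
  ring_nf

lemma nid_neg (x : ℝ) : nid (-x) = nid x := by
  have h1 : nid (-x) ≤ nid x := by
    have := nid_le (-x) (-round x)
    rw [nid]
    calc nid (-x) ≤ |(-x) - ((-round x : ℤ) : ℝ)| := nid_le _ _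
      _ = |x - (round x : ℝ)| := by push_cast; rw [← abs_neg]; ring_nf
  have h2 : nid x ≤ nid (-x) := by
    calc nid x ≤ |x - ((-round (-x) : ℤ) : ℝ)| := nid_le _ _
      _ = |(-x) - ((round (-x) : ℤ) : ℝ)| := by push_cast; rw [← abs_neg]; ring_nf
      _ = nid (-x) := rfl
  linarith

lemma nid_zero : nid 0 = 0 := by simp [nid]

lemma measurable_nid : Measurable nid := by
  have : nid = fun x => |Int.fract (x + 1 / 2) - 1 / 2| := by
    funext x
    rw [nid, round_eq, Int.fract]
    ring_nf
  rw [this]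
  exact ((measurable_id.add_const _).fract.sub measurable_const).abs

lemma mem_iff_abs {u r δ : ℝ} :
    u ∈ Set.Icc (max (-δ) (-r - δ)) (min δ (δ - r)) ↔ |u| ≤ δ ∧ |u + r| ≤ δ := by
  rw [Set.mem_Icc, max_le_iff, le_min_iff, abs_le, abs_le]
  constructor
  · rintro ⟨⟨h1, h2⟩, h3, h4⟩
    exact ⟨⟨h1, h3⟩, ⟨by linarith, by linarith⟩⟩
  · rintro ⟨⟨h1, h2⟩, h3, h4⟩
    exact ⟨⟨h1, by linarith⟩, h2, by linarith⟩

lemma abs_le_of_nid {u r δ : ℝ} (hδ : 0 < δ) (hδ4 : δ ≤ 1 / 4) (hr : |r| ≤ 1 / 2)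
    (hu : |u| < δ) (h2 : nid (u + r) ≤ δ) : |u + r| ≤ δ := by
  rcases eq_or_ne (round (u + r)) 0 with hm | hm
  · have e : nid (u + r) = |u + r| := by rw [nid, hm]; simp
    rwa [e] at h2
  · exfalso
    have h1 : (1 : ℝ) ≤ |((round (u + r) : ℤ) : ℝ)| := by exact_mod_cast Int.one_le_abs hm
    have t1 : |((round (u + r) : ℤ) : ℝ)| ≤ |u + r| + |u + r - (round (u + r) : ℝ)| := by
      have t := abs_sub (u + r) (u + r - (round (u + r) : ℝ))
      have e : (u + r) - (u + r - (round (u + r) : ℝ)) = ((round (u + r) : ℤ) : ℝ) := by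
        push_cast; ring
      rwa [e] at t
    have t2 : |u + r| ≤ |u| + |r| := abs_add_le u r
    have t3 : nid (u + r) = |u + r - (round (u + r) : ℝ)| := rfl
    linarith [t3 ▸ h2]

lemma overlap (a b δ : ℝ) (hδ : 0 < δ) (hδ4 : δ ≤ 1 / 4) :
    (∫ t in Set.Icc (0 : ℝ) 1,
        (if nid (a - t) ≤ δ then (1 : ℝ) else 0) * (if nid (b - t) ≤ δ then (1 : ℝ) else 0))
      = max 0 (2 * δ - nid (a - b)) := by
  set c : ℝ := b - a with hc
  set r : ℝ := c - round c with hrdef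
  have hr2 : |r| ≤ 1 / 2 := abs_sub_round c
  have hnid_ab : nid (a - b) = |r| := by
    have e1 : a - b = -c := by rw [hc]; ring
    have e2 : c = r + ((round c : ℤ) : ℝ) := by rw [hrdef]; push_cast; ring
    rw [e1, nid_neg, e2, nid_add_int, nid_eq_abs hr2]
  set h : ℝ → ℝ := fun u => (if nid u ≤ δ then (1 : ℝ) else 0) * (if nid (u + r) ≤ δ then (1 : ℝ) else 0) with hh
  have hpt : ∀ t : ℝ, (if nid (a - t) ≤ δ then (1 : ℝ) else 0) * (if nid (b - t) ≤ δ then (1 : ℝ) else 0) = h (a - t) := by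
    intro t
    have e : (a - t) + r = (b - t) + ((-round c : ℤ) : ℝ) := by push_cast; rw [hrdef, hc]; ring
    rw [hh]; simp only
    rw [e, nid_add_int]
  have hper : Function.Periodic h 1 := by
    intro u
    have e1 : u + 1 + r = (u + r) + ((1 : ℤ) : ℝ) := by push_cast; ring
    have e2 : u + (1 : ℝ) = u + ((1 : ℤ) : ℝ) := by push_cast; ring
    rw [hh]; simp only
    rw [e1, e2, nid_add_int, nid_add_int]
  set lo : ℝ := max (-δ) (-r - δ) with hlo
  set hi : ℝ := min δ (δ - r) with hhi
  have habs : |r| = (δ - hi) + (lo + δ) := by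
    rcases le_total 0 r with h0 | h0
    · rw [abs_of_nonneg h0, hhi, hlo, min_eq_right (by linarith), max_eq_left (by linarith)]
      ring
    · rw [abs_of_nonpos h0, hhi, hlo, min_eq_left (by linarith), max_eq_right (by linarith)]
      ring
  have key : ∀ u ∈ Set.Ioc (-(1/2) : ℝ) (1/2), u ≠ δ → u ≠ -δ →
      h u = Set.indicator (Set.Icc lo hi) (fun _ => (1 : ℝ)) u := by
    intro u hu hne1 hne2
    rw [Set.indicator_apply]
    have hu2 : |u| ≤ 1 / 2 := abs_le.2 ⟨by linarith [hu.1], hu.2⟩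
    by_cases hmem : u ∈ Set.Icc lo hi
    · rcases mem_iff_abs.1 hmem with ⟨h1, h2⟩
      rw [hh]; simp only
      rw [if_pos (le_trans (nid_le_abs u) h1), if_pos (le_trans (nid_le_abs _) h2), if_pos hmem]
      norm_num
    · rw [if_neg hmem, hh]; simp only
      by_cases c1 : nid u ≤ δ
      · have habs1 : |u| ≤ δ := by rwa [nid_eq_abs hu2] at c1
        have habs1' : |u| < δ := by
          rcases lt_or_eq_of_le habs1 with h' | h'
          · exact h'
          · exfalso
            rcases (abs_eq (le_of_lt hδ)).1 h' with h'' | h''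
            · exact hne1 h''
            · exact hne2 h''
        by_cases c2 : nid (u + r) ≤ δ
        · exact absurd (mem_iff_abs.2 ⟨habs1, abs_le_of_nid hδ hδ4 hr2 habs1' c2⟩) hmem
        · rw [if_neg c2]; ring
      · rw [if_neg c1]; ring
  -- now the integral computation
  have step1 : (∫ t in Set.Icc (0 : ℝ) 1,
        (if nid (a - t) ≤ δ then (1 : ℝ) else 0) * (if nid (b - t) ≤ δ then (1 : ℝ) else 0))
      = ∫ u in Set.Ioc (-(1/2) : ℝ) (1/2), h u := by
    calc (∫ t in Set.Icc (0 : ℝ) 1,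
        (if nid (a - t) ≤ δ then (1 : ℝ) else 0) * (if nid (b - t) ≤ δ then (1 : ℝ) else 0))
        = ∫ t in Set.Icc (0 : ℝ) 1, h (a - t) := by simp_rw [hpt]
      _ = ∫ t in Set.Ioc (0 : ℝ) 1, h (a - t) := MeasureTheory.integral_Icc_eq_integral_Ioc
      _ = ∫ t in (0 : ℝ)..1, h (a - t) := (intervalIntegral.integral_of_le zero_le_one).symm
      _ = ∫ u in (a - 1)..(a - 0), h u := intervalIntegral.integral_comp_sub_left h a
      _ = ∫ u in (a - 1)..((a - 1) + 1), h u := by norm_num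
      _ = ∫ u in (-(1/2) : ℝ)..((-(1/2)) + 1), h u := hper.intervalIntegral_add_eq (a - 1) (-(1/2))
      _ = ∫ u in (-(1/2) : ℝ)..(1/2 : ℝ), h u := by norm_num
      _ = ∫ u in Set.Ioc (-(1/2) : ℝ) (1/2), h u := intervalIntegral.integral_of_le (by norm_num)
  rw [step1]
  have hae : ∀ᵐ (u : ℝ), u ∈ Set.Ioc (-(1/2) : ℝ) (1/2) →
      h u = Set.indicator (Set.Icc lo hi) (fun _ => (1 : ℝ)) u := by
    have h1 : ∀ᵐ (u : ℝ), u ≠ δ := by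
      exact (MeasureTheory.compl_mem_ae_iff).2 (Real.volume_singleton (a := δ))
    have h2 : ∀ᵐ (u : ℝ), u ≠ -δ := by
      exact (MeasureTheory.compl_mem_ae_iff).2 (Real.volume_singleton (a := -δ))
    filter_upwards [h1, h2] with u hu1 hu2 hmem
    exact key u hmem hu1 hu2
  rw [MeasureTheory.setIntegral_congr_ae measurableSet_Ioc hae,
    MeasureTheory.setIntegral_indicator measurableSet_Icc, MeasureTheory.setIntegral_const]
  rw [smul_eq_mul, mul_one, hnid_ab]
  rcases le_or_gt lo hi with hle | hlt
  · have hsub : Set.Icc lo hi ⊆ Set.Ioc (-(1/2) : ℝ) (1/2) := by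
      intro u hu
      have l1 : -δ ≤ u := le_trans (le_max_left _ _) hu.1
      have l2 : u ≤ δ := le_trans hu.2 (min_le_left _ _)
      exact ⟨by linarith, by linarith⟩
    rw [Set.inter_eq_self_of_subset_right hsub, Real.volume_real_Icc_of_le hle]
    rw [max_eq_right (by linarith)]
    linarith
  · rw [Set.Icc_eq_empty (not_le.2 hlt), Set.inter_empty, measureReal_empty]
    rw [max_eq_left (by linarith)]

/-- For `k = 2`: `G_β(s,t,N) = H_β(s,t,N) = N^{-(1-β)}·#{1 ≤ i ≤ N : ‖x_i - t‖ ≤ s/(2N^β)}`. -/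
noncomputable def Gpair (x : ℕ → ℝ) (β s : ℝ) (N : ℕ) (t : ℝ) : ℝ :=
  (((Finset.range N).filter (fun i => nid (x i - t) ≤ s / (2 * (N : ℝ) ^ β))).card : ℝ)
    / (N : ℝ) ^ (1 - β)

/-- for `k = 2`, `β ∈ (0,1]`, `s > 0` and `N ≥ 1` with `s/N^β ≤ 1/2`,
`∫_0^1 G_β(s,t,N)·H_β(s,t,N) dt
  = N^{-(2-β)} ∑_{i ≠ j ≤ N} s·max(0, 1 - N^β‖x_i - x_j‖/s) + s·N^{-(1-β)}`. -/
theorem stmt7 (x : ℕ → ℝ) (hx : ∀ n, x n ∈ Set.Ico (0 : ℝ) 1)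
    (β : ℝ) (hβ : 0 < β) (hβ1 : β ≤ 1) (s : ℝ) (hs : 0 < s)
    (N : ℕ) (hN : 1 ≤ N) (hsN : s / (N : ℝ) ^ β ≤ 1 / 2) :
    (∫ t in Set.Icc (0 : ℝ) 1, Gpair x β s N t * Gpair x β s N t)
      = (∑ p ∈ (Finset.range N ×ˢ Finset.range N).filter (fun p => p.1 ≠ p.2),
          s * max 0 (1 - (N : ℝ) ^ β * nid (x p.1 - x p.2) / s)) / (N : ℝ) ^ (2 - β)
        + s / (N : ℝ) ^ (1 - β) := by
  have hN0 : (0 : ℝ) < (N : ℝ) := by exact_mod_cast hN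
  have hNβ : (0 : ℝ) < (N : ℝ) ^ β := Real.rpow_pos_of_pos hN0 β
  have hQ : (0 : ℝ) < (N : ℝ) ^ (1 - β) := Real.rpow_pos_of_pos hN0 _
  have hR : (0 : ℝ) < (N : ℝ) ^ (2 - β) := Real.rpow_pos_of_pos hN0 _
  set δ : ℝ := s / (2 * (N : ℝ) ^ β) with hδdef
  have hδpos : 0 < δ := by rw [hδdef]; positivity
  have hδ4 : δ ≤ 1 / 4 := by
    rw [hδdef, div_le_iff₀ (by positivity)]
    rw [div_le_iff₀ hNβ] at hsN
    nlinarith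
  set χ : ℕ → ℝ → ℝ := fun i t => if nid (x i - t) ≤ δ then 1 else 0 with hχ
  have hmeasχ : ∀ i, Measurable (χ i) := by
    intro i
    apply Measurable.ite _ measurable_const measurable_const
    exact measurableSet_le (measurable_nid.comp (measurable_const.sub measurable_id))
      measurable_const
  have hint : ∀ i j, IntegrableOn (fun t => χ i t * χ j t) (Set.Icc (0 : ℝ) 1) := by
    intro i j
    apply Integrable.mono' (g := fun _ => (1 : ℝ))
    · exact integrableOn_const (by rw [Real.volume_Icc]; exact ENNReal.ofReal_ne_top)
    · exact (((hmeasχ i).mul (hmeasχ j)).aestronglyMeasurable).restrict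
    · filter_upwards with t
      rw [hχ]
      simp only
      split_ifs <;> norm_num
  set S := Finset.range N ×ˢ Finset.range N with hS
  set D : ℝ := (N : ℝ) ^ (1 - β) * (N : ℝ) ^ (1 - β) with hD
  have hGpt : ∀ t : ℝ, Gpair x β s N t * Gpair x β s N t
      = (∑ p ∈ S, χ p.1 t * χ p.2 t) / D := by
    intro t
    have hcard : (((Finset.range N).filter
        (fun i => nid (x i - t) ≤ s / (2 * (N : ℝ) ^ β))).card : ℝ)
        = ∑ i ∈ Finset.range N, χ i t := by
      rw [hχ, Finset.card_filter]
      push_cast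
      rfl
    simp only [Gpair]
    rw [hcard, div_mul_div_comm, Finset.sum_mul_sum, hD, hS, Finset.sum_product]
  calc (∫ t in Set.Icc (0 : ℝ) 1, Gpair x β s N t * Gpair x β s N t)
      = ∫ t in Set.Icc (0 : ℝ) 1, (∑ p ∈ S, χ p.1 t * χ p.2 t) / D := by
        simp_rw [hGpt]
    _ = (∫ t in Set.Icc (0 : ℝ) 1, ∑ p ∈ S, χ p.1 t * χ p.2 t) / D := integral_div _ _
    _ = (∑ p ∈ S, ∫ t in Set.Icc (0 : ℝ) 1, χ p.1 t * χ p.2 t) / D := by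
        rw [MeasureTheory.integral_finset_sum S (fun p _ => hint p.1 p.2)]
    _ = (∑ p ∈ S, max 0 (2 * δ - nid (x p.1 - x p.2))) / D := by
        congr 1
        refine Finset.sum_congr rfl fun p _ => ?_
        rw [hχ]
        exact overlap (x p.1) (x p.2) δ hδpos hδ4
    _ = ((∑ p ∈ S.filter (fun p => p.1 ≠ p.2), max 0 (2 * δ - nid (x p.1 - x p.2)))
          + ∑ p ∈ S.filter (fun p => ¬ p.1 ≠ p.2), max 0 (2 * δ - nid (x p.1 - x p.2))) / D := by
        rw [Finset.sum_filter_add_sum_filter_not]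
    _ = (∑ p ∈ S.filter (fun p => p.1 ≠ p.2),
          s * max 0 (1 - (N : ℝ) ^ β * nid (x p.1 - x p.2) / s)) / (N : ℝ) ^ (2 - β)
        + s / (N : ℝ) ^ (1 - β) := by
        have hkey : 2 * δ * (N : ℝ) ^ β = s := by rw [hδdef]; field_simp
        have hterm : ∀ d : ℝ, max 0 (2 * δ - d)
            = (s * max 0 (1 - (N : ℝ) ^ β * d / s)) / (N : ℝ) ^ β := by
          intro d
          rcases le_total d (2 * δ) with hd | hd
          · have h1 : (N : ℝ) ^ β * d ≤ s := by nlinarith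
            rw [max_eq_right (by linarith),
              max_eq_right (by rw [sub_nonneg, div_le_one hs]; exact h1)]
            field_simp
            linear_combination hkey
          · have h1 : s ≤ (N : ℝ) ^ β * d := by nlinarith
            rw [max_eq_left (by linarith),
              max_eq_left (by rw [sub_nonpos, le_div_iff₀ hs]; linarith)]
            simp
        have hdiagset : S.filter (fun p => ¬ p.1 ≠ p.2)
            = (Finset.range N).image (fun i => (i, i)) := by
          ext p
          simp only [Finset.mem_filter, Finset.mem_image, Finset.mem_range, hS,
            Finset.mem_product, not_not]
          constructor
          · rintro ⟨⟨h1, h2⟩, h3⟩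
            exact ⟨p.1, h1, Prod.ext rfl h3⟩
          · rintro ⟨i, hi, rfl⟩
            exact ⟨⟨hi, hi⟩, rfl⟩
        have hdiag : (∑ p ∈ S.filter (fun p => ¬ p.1 ≠ p.2),
            max 0 (2 * δ - nid (x p.1 - x p.2))) = (N : ℝ) * (2 * δ) := by
          rw [hdiagset, Finset.sum_image (fun a _ b _ h => (Prod.ext_iff.1 h).1)]
          simp only [sub_self, nid_zero, sub_zero, max_eq_right (by linarith : (0:ℝ) ≤ 2 * δ)]
          rw [Finset.sum_const, Finset.card_range, nsmul_eq_mul]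
        rw [Finset.sum_congr rfl (fun p _ => hterm (nid (x p.1 - x p.2))), ← Finset.sum_div,
          hdiag]
        set T : ℝ := ∑ p ∈ S.filter (fun p => p.1 ≠ p.2),
          s * max 0 (1 - (N : ℝ) ^ β * nid (x p.1 - x p.2) / s) with hT
        have f1 : (N : ℝ) ^ β * (N : ℝ) ^ (1 - β) = (N : ℝ) := by
          rw [← Real.rpow_add hN0, show β + (1 - β) = (1 : ℝ) by ring, Real.rpow_one]
        have f2 : (N : ℝ) ^ (2 - β) = (N : ℝ) * (N : ℝ) ^ (1 - β) := by
          rw [show (2 - β : ℝ) = 1 + (1 - β) by ring, Real.rpow_add hN0, Real.rpow_one]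
        rw [hD, f2, ← hkey]
        field_simp
        linear_combination (-(T + (N:ℝ) ^ β * (N:ℝ) * 2 * δ)) * f1
end

section
/- Let x = (x_n) be a sequence in [0,1] whose discrepancy satisfies D_N(x) = o(N^{-(1-ε)}) for some 0 < ε < 1. Then for every integer k ≥ 2 and every β with 0 < β ≤ 1 - ε, the sequence has (k,β)-Poissonian box correlations: for all s_1,...,s_{k-1} > 0, R_{k,β}(s_1,...,s_{k-1},N) → ∏_{l=1}^{k-1} 2 s_l as N → ∞. -/
open MeasureTheory Filter Asymptotics
open scoped Classical

/-- The (extreme) discrepancy of the first `N` points of a sequence: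
`sup` over intervals `[a,b) ⊆ [0,1)` of `|#{i ≤ N : x_i ∈ [a,b)}/N - (b-a)|`. -/
noncomputable def disc (x : ℕ → ℝ) (N : ℕ) : ℝ :=
  sSup {d : ℝ | ∃ a b : ℝ, 0 ≤ a ∧ a ≤ b ∧ b ≤ 1 ∧
    d = |(((Finset.range N).filter (fun i => x i ∈ Set.Ico a b)).card : ℝ) / N - (b - a)|}

namespace Stmt8Aux

open Finset

variable {x : ℕ → ℝ}

lemma disc_mem (x : ℕ → ℝ) (N : ℕ) {a b : ℝ} (ha : 0 ≤ a) (hab : a ≤ b) (hb : b ≤ 1) :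
    |(((Finset.range N).filter (fun i => x i ∈ Set.Ico a b)).card : ℝ) / N - (b - a)| ≤
      disc x N := by
  apply le_csSup
  · refine ⟨2, ?_⟩
    rintro d ⟨a, b, ha, hab, hb, rfl⟩
    have h1 : (((Finset.range N).filter (fun i => x i ∈ Set.Ico a b)).card : ℝ) / N ≤ 1 := by
      rcases Nat.eq_zero_or_pos N with h | h
      · simp [h]
      · rw [div_le_one (by exact_mod_cast h)]
        exact_mod_cast (Finset.card_filter_le _ _).trans (by simp)
    have h0 : (0:ℝ) ≤ (((Finset.range N).filter (fun i => x i ∈ Set.Ico a b)).card : ℝ) / N := by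
      positivity
    rw [abs_le]; constructor <;> nlinarith
  · exact ⟨a, b, ha, hab, hb, rfl⟩

lemma disc_nonneg (x : ℕ → ℝ) (N : ℕ) : 0 ≤ disc x N := by
  have := disc_mem x N (a := 0) (b := 0) le_rfl le_rfl zero_le_one
  simpa using (abs_nonneg _).trans this

lemma count_Ico_ge (x : ℕ → ℝ) (N : ℕ) {a b : ℝ} (ha : 0 ≤ a) (hab : a ≤ b) (hb : b ≤ 1) :
    (N : ℝ) * (b - a) - N * disc x N ≤
      (((Finset.range N).filter (fun i => x i ∈ Set.Ico a b)).card : ℝ) := by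
  have h := (abs_le.mp (disc_mem x N ha hab hb)).1
  rcases Nat.eq_zero_or_pos N with h0 | h0
  · subst h0; simp
  have hN : (0:ℝ) < N := by exact_mod_cast h0
  have := mul_le_mul_of_nonneg_left h hN.le
  rw [mul_sub, mul_div_cancel₀ _ hN.ne'] at this
  nlinarith

lemma count_ones_le (hx : ∀ n, x n ∈ Set.Icc (0:ℝ) 1) (N : ℕ) :
    (((Finset.range N).filter (fun i => x i = 1)).card : ℝ) ≤ N * disc x N := by
  have hc : (Finset.range N).filter (fun i => x i ∈ Set.Ico (0:ℝ) 1)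
      = (Finset.range N).filter (fun i => ¬ x i = 1) := by
    apply filter_congr
    intro i _
    have h1 := (hx i).1; have h2 := (hx i).2
    simp only [Set.mem_Ico, eq_iff_iff]
    constructor
    · rintro ⟨-, h⟩; intro he; rw [he] at h; exact lt_irrefl _ h
    · intro h; exact ⟨h1, lt_of_le_of_ne h2 h⟩
  have hadd := Finset.card_filter_add_card_filter_not (s := Finset.range N)
    (fun i => x i = 1)
  rw [← hc, card_range] at hadd
  have h1 := count_Ico_ge x N (a := 0) (b := 1) le_rfl zero_le_one le_rfl
  have h2 : (((Finset.range N).filter (fun i => x i = 1)).card : ℝ)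
      + ((Finset.range N).filter (fun i => x i ∈ Set.Ico (0:ℝ) 1)).card = N := by
    exact_mod_cast by omega
  nlinarith [h1]

lemma count_Icc_le (hx : ∀ n, x n ∈ Set.Icc (0:ℝ) 1) (N : ℕ) (hN : 0 < N)
    {a b : ℝ} (ha : 0 ≤ a) (hab : a ≤ b) (hb : b ≤ 1) :
    (((Finset.range N).filter (fun i => x i ∈ Set.Icc a b)).card : ℝ)
      ≤ N * (b - a) + 2 * N * disc x N := by
  have hNr : (0:ℝ) < N := by exact_mod_cast hN
  refine le_of_forall_pos_le_add ?_
  intro ε hε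
  set b' := min (b + ε / N) 1 with hb'
  have hab' : a ≤ b' := le_min (by nlinarith [div_pos hε hNr]) (hab.trans hb)
  have hsub : (Finset.range N).filter (fun i => x i ∈ Set.Icc a b) ⊆
      ((Finset.range N).filter (fun i => x i ∈ Set.Ico a b')) ∪
      ((Finset.range N).filter (fun i => x i = 1)) := by
    intro i hi
    rw [mem_filter] at hi
    have hir := hi.1
    have hia : a ≤ x i := hi.2.1
    have hib : x i ≤ b := hi.2.2
    rw [mem_union, mem_filter, mem_filter]
    by_cases hlt : x i < b'
    · exact Or.inl ⟨hir, hia, hlt⟩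
    · right
      refine ⟨hir, ?_⟩
      have h1 : b' ≤ x i := not_lt.mp hlt
      have h2 : ¬ (b + ε / N ≤ x i) := by
        have := div_pos hε hNr; push_neg; linarith
      rcases min_le_iff.mp h1 with h | h
      · exact absurd h h2
      · exact le_antisymm (hx i).2 h
  have hc1 : (((Finset.range N).filter (fun i => x i ∈ Set.Ico a b')).card : ℝ)
      ≤ N * (b' - a) + N * disc x N := by
    have h := (abs_le.mp (disc_mem x N ha hab' (min_le_right _ _))).2
    have := mul_le_mul_of_nonneg_left h hNr.le
    rw [mul_sub, mul_div_cancel₀ _ hNr.ne'] at this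
    nlinarith
  have hc2 := count_ones_le hx N
  have hcard : (((Finset.range N).filter (fun i => x i ∈ Set.Icc a b)).card : ℝ)
      ≤ (((Finset.range N).filter (fun i => x i ∈ Set.Ico a b')).card : ℝ)
        + (((Finset.range N).filter (fun i => x i = 1)).card : ℝ) := by
    exact_mod_cast (Finset.card_le_card hsub).trans (Finset.card_union_le _ _)
  have hb'le : b' ≤ b + ε / N := min_le_left _ _
  have : (N:ℝ) * (b' - a) ≤ N * (b - a) + ε := by
    have : (N:ℝ) * (ε / N) = ε := mul_div_cancel₀ _ hNr.ne'
    nlinarith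
  nlinarith

lemma count_Icc_abs (hx : ∀ n, x n ∈ Set.Icc (0:ℝ) 1) (N : ℕ) (hN : 0 < N)
    {a b : ℝ} (ha : 0 ≤ a) (hab : a ≤ b) (hb : b ≤ 1) :
    |(((Finset.range N).filter (fun i => x i ∈ Set.Icc a b)).card : ℝ) / N - (b - a)|
      ≤ 2 * disc x N := by
  have hNr : (0:ℝ) < N := by exact_mod_cast hN
  have hub := count_Icc_le hx N hN ha hab hb
  have hlb : (N:ℝ) * (b - a) - N * disc x N ≤
      (((Finset.range N).filter (fun i => x i ∈ Set.Icc a b)).card : ℝ) := by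
    refine le_trans (count_Ico_ge x N ha hab hb) ?_
    have : (Finset.range N).filter (fun i => x i ∈ Set.Ico a b) ⊆
        (Finset.range N).filter (fun i => x i ∈ Set.Icc a b) := by
      apply Finset.monotone_filter_right
      intro i _ hi
      exact ⟨hi.1, hi.2.le⟩
    exact_mod_cast Finset.card_le_card this
  have hD := disc_nonneg x N
  rw [abs_le]
  constructor
  · rw [le_sub_iff_add_le, le_div_iff₀ hNr]
    nlinarith
  · rw [sub_le_iff_le_add, div_le_iff₀ hNr]
    nlinarith

lemma nid_le_of_int {z t : ℝ} (ht : t < 1/2) (k : ℤ) (hk : |z - k| ≤ t) : nid z ≤ t := by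
  have h0 : round (z - k) = 0 := by
    rw [round_eq_zero_iff]
    have := abs_le.mp hk
    constructor
    · linarith [this.1]
    · exact lt_of_le_of_lt this.2 ht
  have h1 : round z = k := by
    have := round_sub_intCast z k
    omega
  rw [nid, h1]
  exact hk

lemma nid_le_iff {z t : ℝ} (hz : z ∈ Set.Icc (-1:ℝ) 1) (ht0 : 0 ≤ t) (ht : t < 1/2) :
    nid z ≤ t ↔ |z| ≤ t ∨ |z - 1| ≤ t ∨ |z + 1| ≤ t := by
  constructor
  · intro h
    rw [nid] at h
    have habs : |((round z : ℤ):ℝ)| ≤ 1 + t := by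
      set k := round z with hk
      have : |(k:ℝ)| = |z - (z - k)| := by ring_nf
      rw [this]
      calc |z - (z - k)| ≤ |z| + |z - k| := abs_sub _ _
        _ ≤ 1 + t := by
            have := abs_le.mpr ⟨hz.1, hz.2⟩
            linarith [h]
    have hk2 : -2 < ((round z : ℤ):ℝ) ∧ ((round z : ℤ):ℝ) < 2 := by
      have := abs_le.mp habs
      constructor <;> linarith
    have hk3 : round z = -1 ∨ round z = 0 ∨ round z = 1 := by
      have h1 : (-2:ℤ) < round z := by exact_mod_cast hk2.1
      have h2 : round z < (2:ℤ) := by exact_mod_cast hk2.2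
      omega
    rcases hk3 with h' | h' | h' <;> rw [h'] at h
    · right; right; simpa using h
    · left; simpa using h
    · right; left; simpa using h
  · rintro (h | h | h)
    · exact nid_le_of_int ht 0 (by simpa using h)
    · exact nid_le_of_int ht 1 (by simpa using h)
    · exact nid_le_of_int ht (-1) (by simpa using h)

lemma count_nid_abs (hx : ∀ n, x n ∈ Set.Icc (0:ℝ) 1) (N : ℕ) (hN : 0 < N)
    {c t : ℝ} (hc : c ∈ Set.Icc (0:ℝ) 1) (ht0 : 0 ≤ t) (ht : t < 1/2) :
    |(((Finset.range N).filter (fun i => nid (x i - c) ≤ t)).card : ℝ) / N - 2 * t|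
      ≤ 6 * disc x N := by
  have hNr : (0:ℝ) < N := by exact_mod_cast hN
  have hD := disc_nonneg x N
  have hc0 := hc.1
  have hc1 := hc.2
  -- three predicates
  set P0 : ℕ → Prop := fun i => |x i - c| ≤ t with hP0
  set P1 : ℕ → Prop := fun i => c + 1 - t ≤ x i with hP1
  set P2 : ℕ → Prop := fun i => x i ≤ c - 1 + t with hP2
  set L0 : ℝ := min (c + t) 1 - max (c - t) 0 with hL0
  set L1 : ℝ := max (t - c) 0 with hL1
  set L2 : ℝ := max (c - 1 + t) 0 with hL2
  -- piece 0
  have h0 : |(((Finset.range N).filter P0).card : ℝ) / N - L0| ≤ 2 * disc x N := by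
    have he : (Finset.range N).filter P0 =
        (Finset.range N).filter (fun i => x i ∈ Set.Icc (max (c - t) 0) (min (c + t) 1)) := by
      apply filter_congr
      intro i _
      have h1 := (hx i).1; have h2 := (hx i).2
      simp only [hP0, Set.mem_Icc, eq_iff_iff, abs_le, max_le_iff, le_min_iff]
      constructor
      · rintro ⟨u, v⟩; exact ⟨⟨by linarith, h1⟩, by linarith, h2⟩
      · rintro ⟨⟨u, -⟩, v, -⟩; constructor <;> linarith
    rw [he, hL0]
    exact count_Icc_abs hx N hN (le_max_right _ _)
      (max_le (le_min (by linarith) (by linarith)) (le_min (by linarith) zero_le_one))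
      (min_le_right _ _)
  -- piece 1
  have h1 : |(((Finset.range N).filter P1).card : ℝ) / N - L1| ≤ 2 * disc x N := by
    by_cases hct : c ≤ t
    · have he : (Finset.range N).filter P1 =
          (Finset.range N).filter (fun i => x i ∈ Set.Icc (c + 1 - t) 1) := by
        apply filter_congr
        intro i _
        simp only [hP1, Set.mem_Icc, eq_iff_iff]
        exact ⟨fun h => ⟨h, (hx i).2⟩, fun h => h.1⟩
      have hL : L1 = t - c := max_eq_left (by linarith)
      rw [he, hL]
      have := count_Icc_abs hx N hN (a := c + 1 - t) (b := 1)
        (by linarith) (by linarith) le_rfl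
      convert this using 2
      ring
    · have he : (Finset.range N).filter P1 = ∅ := by
        apply Finset.filter_eq_empty_iff.mpr
        intro i _
        simp only [hP1, not_le]
        have := (hx i).2
        push_neg at hct
        linarith
      have hL : L1 = 0 := max_eq_right (by push_neg at hct; linarith)
      rw [he, hL]
      simp [hD]
  -- piece 2
  have h2 : |(((Finset.range N).filter P2).card : ℝ) / N - L2| ≤ 2 * disc x N := by
    by_cases hct : 1 - t ≤ c
    · have he : (Finset.range N).filter P2 =
          (Finset.range N).filter (fun i => x i ∈ Set.Icc 0 (c - 1 + t)) := by
        apply filter_congr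
        intro i _
        simp only [hP2, Set.mem_Icc, eq_iff_iff]
        exact ⟨fun h => ⟨(hx i).1, h⟩, fun h => h.2⟩
      have hL : L2 = c - 1 + t := max_eq_left (by linarith)
      rw [he, hL]
      have := count_Icc_abs hx N hN (a := 0) (b := c - 1 + t)
        le_rfl (by linarith) (by linarith)
      convert this using 2
      ring
    · have he : (Finset.range N).filter P2 = ∅ := by
        apply Finset.filter_eq_empty_iff.mpr
        intro i _
        simp only [hP2, not_le]
        have := (hx i).1
        push_neg at hct
        linarith
      have hL : L2 = 0 := max_eq_right (by push_neg at hct; linarith)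
      rw [he, hL]
      simp [hD]
  -- decomposition of the filter
  have hcov : (Finset.range N).filter (fun i => nid (x i - c) ≤ t) =
      (Finset.range N).filter (fun i => P0 i ∨ P1 i ∨ P2 i) := by
    apply filter_congr
    intro i _
    have h1' := (hx i).1; have h2' := (hx i).2
    rw [nid_le_iff ⟨by linarith, by linarith⟩ ht0 ht]
    constructor
    · rintro (h | h | h)
      · exact Or.inl h
      · refine Or.inr (Or.inl ?_)
        have := (abs_le.mp h).1
        simp only [hP1]; linarith
      · refine Or.inr (Or.inr ?_)
        have := (abs_le.mp h).2
        simp only [hP2]; linarith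
    · rintro (h | h | h)
      · exact Or.inl h
      · refine Or.inr (Or.inl ?_)
        rw [abs_le]
        simp only [hP1] at h
        constructor <;> linarith
      · refine Or.inr (Or.inr ?_)
        rw [abs_le]
        simp only [hP2] at h
        constructor <;> linarith
  have hd12 : Disjoint ((Finset.range N).filter P1) ((Finset.range N).filter P2) := by
    rw [Finset.disjoint_filter]
    intro i _ hi1 hi2
    simp only [hP1] at hi1; simp only [hP2] at hi2
    linarith
  have hd012 : Disjoint ((Finset.range N).filter P0)
      (((Finset.range N).filter P1) ∪ ((Finset.range N).filter P2)) := by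
    rw [Finset.disjoint_union_right]
    constructor
    · rw [Finset.disjoint_filter]
      intro i _ hi0 hi1
      simp only [hP0] at hi0; simp only [hP1] at hi1
      have := (abs_le.mp hi0).2
      linarith
    · rw [Finset.disjoint_filter]
      intro i _ hi0 hi2
      simp only [hP0] at hi0; simp only [hP2] at hi2
      have := (abs_le.mp hi0).1
      linarith
  have hcards : (((Finset.range N).filter (fun i => nid (x i - c) ≤ t)).card : ℝ)
      = ((Finset.range N).filter P0).card + ((Finset.range N).filter P1).card
        + ((Finset.range N).filter P2).card := by
    rw [hcov, Finset.filter_or, Finset.filter_or, Finset.card_union_of_disjoint hd012,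
      Finset.card_union_of_disjoint hd12]
    push_cast
    ring
  have hLsum : L0 + L1 + L2 = 2 * t := by
    rcases le_or_gt c t with h | h
    · have e1 : min (c + t) 1 = c + t := min_eq_left (by linarith)
      have e2 : max (c - t) (0:ℝ) = 0 := max_eq_right (by linarith)
      have e3 : max (t - c) (0:ℝ) = t - c := max_eq_left (by linarith)
      have e4 : max (c - 1 + t) (0:ℝ) = 0 := max_eq_right (by linarith)
      rw [hL0, hL1, hL2, e1, e2, e3, e4]; ring
    · rcases le_or_gt (1 - t) c with h' | h'
      · have e1 : min (c + t) 1 = 1 := min_eq_right (by linarith)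
        have e2 : max (c - t) (0:ℝ) = c - t := max_eq_left (by linarith)
        have e3 : max (t - c) (0:ℝ) = 0 := max_eq_right (by linarith)
        have e4 : max (c - 1 + t) (0:ℝ) = c - 1 + t := max_eq_left (by linarith)
        rw [hL0, hL1, hL2, e1, e2, e3, e4]; ring
      · have e1 : min (c + t) 1 = c + t := min_eq_left (by linarith)
        have e2 : max (c - t) (0:ℝ) = c - t := max_eq_left (by linarith)
        have e3 : max (t - c) (0:ℝ) = 0 := max_eq_right (by linarith)
        have e4 : max (c - 1 + t) (0:ℝ) = 0 := max_eq_right (by linarith)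
        rw [hL0, hL1, hL2, e1, e2, e3, e4]; ring
  calc |(((Finset.range N).filter (fun i => nid (x i - c) ≤ t)).card : ℝ) / N - 2 * t|
      = |((((Finset.range N).filter P0).card : ℝ) / N - L0)
        + ((((Finset.range N).filter P1).card : ℝ) / N - L1)
        + ((((Finset.range N).filter P2).card : ℝ) / N - L2)| := by
        rw [hcards, ← hLsum]; ring_nf
    _ ≤ |(((Finset.range N).filter P0).card : ℝ) / N - L0|
        + |(((Finset.range N).filter P1).card : ℝ) / N - L1|
        + |(((Finset.range N).filter P2).card : ℝ) / N - L2| := by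
        exact (abs_add_le _ _).trans (by gcongr; exact abs_add_le _ _)
    _ ≤ 6 * disc x N := by linarith


lemma abs_prod_sub_prod_le {ι : Type*} (F : Finset ι) (u v : ι → ℝ) (e B : ℝ)
    (he : 0 ≤ e) (hB : 0 ≤ B) (hu : ∀ i ∈ F, |u i| ≤ B) (hv : ∀ i ∈ F, |v i| ≤ B)
    (huv : ∀ i ∈ F, |u i - v i| ≤ e) :
    |∏ i ∈ F, u i - ∏ i ∈ F, v i| ≤ F.card * e * B ^ (F.card - 1) := by
  induction F using Finset.cons_induction with
  | empty => simp
  | cons a F ha ih =>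
    rw [Finset.prod_cons, Finset.prod_cons, Finset.card_cons]
    have hu' : ∀ i ∈ F, |u i| ≤ B := fun i hi => hu i (Finset.mem_cons_of_mem hi)
    have hv' : ∀ i ∈ F, |v i| ≤ B := fun i hi => hv i (Finset.mem_cons_of_mem hi)
    have huv' : ∀ i ∈ F, |u i - v i| ≤ e := fun i hi => huv i (Finset.mem_cons_of_mem hi)
    have ih' := ih hu' hv' huv'
    have hua : |u a| ≤ B := hu a (Finset.mem_cons_self _ _)
    have huva : |u a - v a| ≤ e := huv a (Finset.mem_cons_self _ _)
    have hpv : |∏ i ∈ F, v i| ≤ B ^ F.card := by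
      rw [Finset.abs_prod]
      calc ∏ i ∈ F, |v i| ≤ ∏ _i ∈ F, B :=
            Finset.prod_le_prod (fun i _ => abs_nonneg _) hv'
        _ = B ^ F.card := Finset.prod_const B
    have key : B * (F.card * e * B ^ (F.card - 1)) ≤ F.card * e * B ^ F.card := by
      rcases Nat.eq_zero_or_pos F.card with h | h
      · simp [h]
      · have h1 : (F.card - 1) + 1 = F.card := Nat.succ_pred_eq_of_pos h
        have h2 : B ^ (F.card - 1) * B = B ^ F.card := by rw [← pow_succ, h1]
        refine le_of_eq ?_
        calc B * (F.card * e * B ^ (F.card - 1))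
            = F.card * e * (B ^ (F.card - 1) * B) := by ring
          _ = F.card * e * B ^ F.card := by rw [h2]
    have step : |u a * ∏ i ∈ F, u i - v a * ∏ i ∈ F, v i|
        ≤ |u a| * |∏ i ∈ F, u i - ∏ i ∈ F, v i| + |u a - v a| * |∏ i ∈ F, v i| := by
      calc |u a * ∏ i ∈ F, u i - v a * ∏ i ∈ F, v i|
          = |u a * (∏ i ∈ F, u i - ∏ i ∈ F, v i) + (u a - v a) * ∏ i ∈ F, v i| := by
            ring_nf
        _ ≤ |u a * (∏ i ∈ F, u i - ∏ i ∈ F, v i)| + |(u a - v a) * ∏ i ∈ F, v i| :=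
            abs_add_le _ _
        _ = |u a| * |∏ i ∈ F, u i - ∏ i ∈ F, v i| + |u a - v a| * |∏ i ∈ F, v i| := by
            rw [abs_mul, abs_mul]
    have hc1 : |u a| * |∏ i ∈ F, u i - ∏ i ∈ F, v i| ≤ B * (F.card * e * B ^ (F.card - 1)) := by
      apply mul_le_mul hua ih' (abs_nonneg _) hB
    have hc2 : |u a - v a| * |∏ i ∈ F, v i| ≤ e * B ^ F.card := by
      apply mul_le_mul huva hpv (abs_nonneg _) he
    have hfin : (F.card + 1 : ℝ) * e * B ^ ((F.card + 1) - 1) = F.card * e * B ^ F.card + e * B ^ F.card := by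
      simp only [Nat.add_sub_cancel]
      ring
    push_cast
    push_cast at hfin
    calc |u a * ∏ i ∈ F, u i - v a * ∏ i ∈ F, v i|
        ≤ B * (F.card * e * B ^ (F.card - 1)) + e * B ^ F.card := by
          linarith [step, hc1, hc2]
      _ ≤ F.card * e * B ^ F.card + e * B ^ F.card := by linarith [key]
      _ = (F.card + 1 : ℝ) * e * B ^ ((F.card + 1) - 1) := hfin.symm

lemma card_filter_fin (N : ℕ) (p : ℕ → Prop) :
    ((univ.filter (fun v : Fin N => p v)).card = ((Finset.range N).filter p).card) := by
  have h : Finset.range N = (Finset.univ : Finset (Fin N)).map Fin.valEmbedding := by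
    rw [Fin.map_valEmbedding_univ, Nat.Iio_eq_range]
  rw [h, Finset.filter_map, Finset.card_map]
  rfl

lemma card_filter_forall (m N : ℕ) (P : Fin m → Fin N → Fin N → Prop) :
    (univ.filter (fun i : Fin (m+1) → Fin N =>
        ∀ l : Fin m, P l (i l.castSucc) (i (Fin.last m)))).card
      = ∑ j : Fin N, ∏ l : Fin m, (univ.filter (fun v : Fin N => P l v j)).card := by
  rw [Finset.card_eq_sum_card_fiberwise
    (f := fun i : Fin (m+1) → Fin N => i (Fin.last m)) (t := univ) (fun i _ => mem_univ _)]
  apply Finset.sum_congr rfl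
  intro j _
  rw [← Fintype.card_piFinset]
  apply Finset.card_bij (fun i _ => fun l : Fin m => i l.castSucc)
  · intro i hi
    simp only [Finset.mem_filter, Finset.mem_univ, true_and] at hi
    rw [Fintype.mem_piFinset]
    intro l
    simp only [Finset.mem_filter, Finset.mem_univ, true_and]
    have := hi.1 l
    rwa [hi.2] at this
  · intro i₁ hi₁ i₂ hi₂ h
    simp only [Finset.mem_filter, Finset.mem_univ, true_and] at hi₁ hi₂
    funext k
    induction k using Fin.lastCases with
    | last => rw [hi₁.2, hi₂.2]
    | cast l => exact congrFun h l
  · intro f hf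
    rw [Fintype.mem_piFinset] at hf
    refine ⟨Fin.snoc f j, ?_, ?_⟩
    · rw [Finset.mem_filter, Finset.mem_filter]
      refine ⟨⟨Finset.mem_univ _, fun l => ?_⟩, ?_⟩
      · rw [Fin.snoc_castSucc, Fin.snoc_last]
        simpa only [Finset.mem_filter, Finset.mem_univ, true_and] using hf l
      · rw [Fin.snoc_last]
    · funext l
      rw [Fin.snoc_castSucc]

lemma card_filter_pair_le (m N : ℕ) (P : Fin m → Fin N → Fin N → Prop)
    (a b : Fin (m+1)) (hab : a ≠ b) (B : ℝ) (hB0 : 0 ≤ B)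
    (hB : ∀ (l : Fin m) (j : Fin N), ((univ.filter (fun v : Fin N => P l v j)).card : ℝ) ≤ B) :
    ((univ.filter (fun i : Fin (m+1) → Fin N =>
        (∀ l : Fin m, P l (i l.castSucc) (i (Fin.last m))) ∧ i a = i b)).card : ℝ)
      ≤ N * B ^ (m - 1) := by
  obtain ⟨c, d, hdc, hrec⟩ : ∃ (c : Fin m) (d : Fin (m+1)), d ≠ c.castSucc ∧
      ∀ i : Fin (m+1) → Fin N, i a = i b → i c.castSucc = i d := by
    rcases Fin.eq_castSucc_or_eq_last a with ⟨a', rfl⟩ | rfl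
    · rcases Fin.eq_castSucc_or_eq_last b with ⟨b', rfl⟩ | rfl
      · refine ⟨a', b'.castSucc, ?_, fun i h => h⟩
        simp only [ne_eq, Fin.castSucc_inj]
        intro h; exact hab (by rw [h])
      · exact ⟨a', Fin.last m, (Fin.castSucc_lt_last a').ne', fun i h => h⟩
    · rcases Fin.eq_castSucc_or_eq_last b with ⟨b', rfl⟩ | rfl
      · exact ⟨b', Fin.last m, (Fin.castSucc_lt_last b').ne', fun i h => h.symm⟩
      · exact absurd rfl hab
  have hcard : Fintype.card {l : Fin m // ¬ l = c} = m - 1 := by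
    rw [Fintype.card_subtype_compl]
    simp [Fintype.card_subtype_eq]
  rw [Finset.card_eq_sum_card_fiberwise
    (f := fun i : Fin (m+1) → Fin N => i (Fin.last m)) (t := univ) (fun i _ => mem_univ _)]
  push_cast
  have hfiber : ∀ j : Fin N,
      (((univ.filter (fun i : Fin (m+1) → Fin N =>
          (∀ l : Fin m, P l (i l.castSucc) (i (Fin.last m))) ∧ i a = i b)).filter
            (fun i => i (Fin.last m) = j)).card : ℝ) ≤ B ^ (m - 1) := by
    intro j
    have hle : ((univ.filter (fun i : Fin (m+1) → Fin N =>
          (∀ l : Fin m, P l (i l.castSucc) (i (Fin.last m))) ∧ i a = i b)).filter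
            (fun i => i (Fin.last m) = j)).card
        ≤ (Fintype.piFinset (fun l : {l : Fin m // ¬ l = c} =>
            univ.filter (fun v : Fin N => P l.1 v j))).card := by
      apply Finset.card_le_card_of_injOn
        (fun i => fun l : {l : Fin m // ¬ l = c} => i l.1.castSucc)
      · intro i hi
        simp only [Finset.mem_coe, Finset.mem_filter, Finset.mem_univ, true_and] at hi ⊢
        rw [Fintype.mem_piFinset]
        intro l
        simp only [Finset.mem_filter, Finset.mem_univ, true_and]
        have := hi.1.1 l.1
        rwa [hi.2] at this
      · intro i₁ hi₁ i₂ hi₂ h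
        simp only [Finset.mem_coe, Finset.mem_filter, Finset.mem_univ, true_and] at hi₁ hi₂
        have hval : ∀ l : Fin m, ¬ l = c → i₁ l.castSucc = i₂ l.castSucc := by
          intro l hl
          exact congrFun h ⟨l, hl⟩
        have hlast : i₁ (Fin.last m) = i₂ (Fin.last m) := by rw [hi₁.2, hi₂.2]
        have hcc : i₁ c.castSucc = i₂ c.castSucc := by
          rw [hrec i₁ hi₁.1.2, hrec i₂ hi₂.1.2]
          rcases Fin.eq_castSucc_or_eq_last d with ⟨d', rfl⟩ | rfl
          · have hd' : ¬ d' = c := by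
              intro h'; exact hdc (by rw [h'])
            exact hval d' hd'
          · exact hlast
        funext k
        induction k using Fin.lastCases with
        | last => exact hlast
        | cast l =>
          by_cases hl : l = c
          · rw [hl]; exact hcc
          · exact hval l hl
    calc (((univ.filter (fun i : Fin (m+1) → Fin N =>
          (∀ l : Fin m, P l (i l.castSucc) (i (Fin.last m))) ∧ i a = i b)).filter
            (fun i => i (Fin.last m) = j)).card : ℝ)
        ≤ ((Fintype.piFinset (fun l : {l : Fin m // ¬ l = c} =>
            univ.filter (fun v : Fin N => P l.1 v j))).card : ℝ) := by exact_mod_cast hle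
      _ = ∏ l : {l : Fin m // ¬ l = c},
            ((univ.filter (fun v : Fin N => P l.1 v j)).card : ℝ) := by
          rw [Fintype.card_piFinset]; push_cast; rfl
      _ ≤ ∏ _l : {l : Fin m // ¬ l = c}, B :=
          Finset.prod_le_prod (fun _ _ => by positivity) (fun l _ => hB l.1 j)
      _ = B ^ (m - 1) := by
          rw [Finset.prod_const, Finset.card_univ, hcard]
  calc ∑ j : Fin N, (((univ.filter (fun i : Fin (m+1) → Fin N =>
          (∀ l : Fin m, P l (i l.castSucc) (i (Fin.last m))) ∧ i a = i b)).filter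
            (fun i => i (Fin.last m) = j)).card : ℝ)
      ≤ ∑ _j : Fin N, B ^ (m - 1) := Finset.sum_le_sum (fun j _ => hfiber j)
    _ = N * B ^ (m - 1) := by rw [Finset.sum_const, Finset.card_univ, Fintype.card_fin,
          nsmul_eq_mul]


lemma main_estimate (x : ℕ → ℝ) (hx : ∀ n, x n ∈ Set.Icc (0:ℝ) 1)
    (m : ℕ) (hm : 1 ≤ m) (β : ℝ) (s : Fin m → ℝ) (hs : ∀ i, 0 < s i)
    (N : ℕ) (hN : 0 < N)
    (ht : ∀ l : Fin m, s l / (N:ℝ) ^ β < 1/2)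
    (hND : (N:ℝ) ^ β * disc x N ≤ 1) :
    |Rcorr x m β s N - ∏ i, 2 * s i| ≤
      (6 + ∑ l, 2 * s l) ^ (m - 1) *
        ((m+1)^2 * (N:ℝ) ^ (β - 1) + 6 * m * ((N:ℝ) ^ β * disc x N)) := by
  have hNr : (0:ℝ) < N := by exact_mod_cast hN
  have hD0 : 0 ≤ disc x N := disc_nonneg x N
  have hXpos : (0:ℝ) < (N:ℝ) ^ ((1:ℝ) - β) := Real.rpow_pos_of_pos hNr _
  have hbpos : (0:ℝ) < (N:ℝ) ^ β := Real.rpow_pos_of_pos hNr _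
  set C : ℝ := 6 + ∑ l, 2 * s l with hC_def
  have hC6 : (6:ℝ) ≤ C := by
    have : (0:ℝ) ≤ ∑ l, 2 * s l :=
      Finset.sum_nonneg (fun l _ => by linarith [hs l])
    rw [hC_def]; linarith
  have hC0 : (0:ℝ) < C := by linarith
  set X : ℝ := (N:ℝ) ^ ((1:ℝ) - β) with hX_def
  -- basic rpow facts
  have hXb : X * (N:ℝ) ^ β = (N:ℝ) := by
    rw [hX_def, ← Real.rpow_add hNr]
    norm_num
  have hXdiv : X = (N:ℝ) / (N:ℝ) ^ β := by
    rw [hX_def, Real.rpow_sub hNr, Real.rpow_one]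
  have hNDX : (N:ℝ) * disc x N ≤ X := by
    calc (N:ℝ) * disc x N = X * ((N:ℝ) ^ β * disc x N) := by rw [← mul_assoc, hXb]
      _ ≤ X * 1 := by
          apply mul_le_mul_of_nonneg_left hND hXpos.le
      _ = X := mul_one X
  -- the predicate and the per-interval counts
  set P : Fin m → Fin N → Fin N → Prop :=
    fun l v j => nid (x v - x j) ≤ s l / (N:ℝ) ^ β with hP_def
  have hcount : ∀ (l : Fin m) (j : Fin N),
      |((Finset.univ.filter (fun v : Fin N => P l v j)).card : ℝ) / N - 2 * (s l / (N:ℝ) ^ β)|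
        ≤ 6 * disc x N := by
    intro l j
    have hcf := card_filter_fin N (fun n => nid (x n - x j) ≤ s l / (N:ℝ) ^ β)
    simp only [hP_def]
    rw [hcf]
    exact count_nid_abs hx N hN (hx j) (div_nonneg (hs l).le hbpos.le) (ht l)
  have hmulcount : ∀ (l : Fin m) (j : Fin N),
      |((Finset.univ.filter (fun v : Fin N => P l v j)).card : ℝ) - 2 * s l * X|
        ≤ 6 * ((N:ℝ) * disc x N) := by
    intro l j
    have h := hcount l j
    have h2 : 2 * s l * X = (N:ℝ) * (2 * (s l / (N:ℝ) ^ β)) := by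
      rw [hXdiv]; field_simp
    have h3 : ((Finset.univ.filter (fun v : Fin N => P l v j)).card : ℝ)
        = (N:ℝ) * (((Finset.univ.filter (fun v : Fin N => P l v j)).card : ℝ) / N) := by
      field_simp
    rw [h2, h3, ← mul_sub, abs_mul, abs_of_pos hNr]
    calc (N:ℝ) * |((Finset.univ.filter (fun v : Fin N => P l v j)).card : ℝ) / N
          - 2 * (s l / (N:ℝ) ^ β)| ≤ (N:ℝ) * (6 * disc x N) := by
          apply mul_le_mul_of_nonneg_left h hNr.le
      _ = 6 * ((N:ℝ) * disc x N) := by ring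
  have hsl_le : ∀ l : Fin m, 2 * s l ≤ C - 6 := by
    intro l
    rw [hC_def]
    have : 2 * s l ≤ ∑ l', 2 * s l' :=
      Finset.single_le_sum (f := fun l' => 2 * s l')
        (fun i _ => by show (0:ℝ) ≤ 2 * s i; linarith [hs i]) (Finset.mem_univ l)
    linarith
  have hBa : ∀ (l : Fin m) (j : Fin N),
      ((Finset.univ.filter (fun v : Fin N => P l v j)).card : ℝ) ≤ C * X := by
    intro l j
    have h := (abs_le.mp (hmulcount l j)).2
    have h2 := hNDX
    have h3 := hsl_le l
    nlinarith [mul_nonneg (sub_nonneg.mpr h3) hXpos.le]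
  have hBs : ∀ l : Fin m, |2 * s l * X| ≤ C * X := by
    intro l
    have h1 : (0:ℝ) ≤ 2 * s l * X := by nlinarith [hXpos.le, (hs l).le]
    rw [abs_of_nonneg h1]
    nlinarith [mul_nonneg (sub_nonneg.mpr (hsl_le l)) hXpos.le]
  -- the non-injective count `G`
  have hG : ((Finset.univ.filter (fun i : Fin (m+1) → Fin N =>
      ∀ l : Fin m, P l (i l.castSucc) (i (Fin.last m)))).card : ℝ)
      = ∑ j : Fin N, ∏ l : Fin m,
          ((Finset.univ.filter (fun v : Fin N => P l v j)).card : ℝ) := by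
    rw [card_filter_forall m N P]
    push_cast
    rfl
  set Q : ℝ := ∏ l : Fin m, (2 * s l * X) with hQ_def
  have hprod : ∀ j : Fin N,
      |(∏ l : Fin m, ((Finset.univ.filter (fun v : Fin N => P l v j)).card : ℝ)) - Q|
        ≤ m * (6 * ((N:ℝ) * disc x N)) * (C * X) ^ (m - 1) := by
    intro j
    have h := abs_prod_sub_prod_le (Finset.univ : Finset (Fin m))
      (fun l => ((Finset.univ.filter (fun v : Fin N => P l v j)).card : ℝ))
      (fun l => 2 * s l * X) (6 * ((N:ℝ) * disc x N)) (C * X)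
      (by nlinarith [mul_nonneg hNr.le hD0]) (mul_nonneg hC0.le hXpos.le)
      (fun l _ => by rw [abs_of_nonneg (Nat.cast_nonneg _)]; exact hBa l j)
      (fun l _ => hBs l)
      (fun l _ => hmulcount l j)
    simpa [Finset.card_univ] using h
  have hsum : |(∑ j : Fin N, ∏ l : Fin m,
        ((Finset.univ.filter (fun v : Fin N => P l v j)).card : ℝ)) - (N:ℝ) * Q|
      ≤ (N:ℝ) * (m * (6 * ((N:ℝ) * disc x N)) * (C * X) ^ (m - 1)) := by
    have h1 : (∑ j : Fin N, ∏ l : Fin m,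
          ((Finset.univ.filter (fun v : Fin N => P l v j)).card : ℝ)) - (N:ℝ) * Q
        = ∑ j : Fin N, ((∏ l : Fin m,
            ((Finset.univ.filter (fun v : Fin N => P l v j)).card : ℝ)) - Q) := by
      rw [Finset.sum_sub_distrib, Finset.sum_const, Finset.card_univ, Fintype.card_fin,
        nsmul_eq_mul]
    rw [h1]
    refine (Finset.abs_sum_le_sum_abs _ _).trans ?_
    have h2 := Finset.sum_le_card_nsmul Finset.univ
      (fun j : Fin N => |(∏ l : Fin m,
          ((Finset.univ.filter (fun v : Fin N => P l v j)).card : ℝ)) - Q|)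
      (m * (6 * ((N:ℝ) * disc x N)) * (C * X) ^ (m - 1)) (fun j _ => hprod j)
    simpa [Finset.card_univ, nsmul_eq_mul] using h2
  -- the injective count versus `G`
  have hQfilter : (Finset.univ.filter (fun i : Fin (m + 1) → Fin N =>
      Function.Injective i ∧
        ∀ l : Fin m, nid (x (i l.castSucc) - x (i (Fin.last m))) ≤ s l / (N : ℝ) ^ β))
      = (Finset.univ.filter (fun i : Fin (m+1) → Fin N =>
          ∀ l : Fin m, P l (i l.castSucc) (i (Fin.last m)))).filter
        (fun i => Function.Injective i) := by
    rw [Finset.filter_filter]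
    apply Finset.filter_congr
    intro i _
    simp only [hP_def]
    exact and_comm
  have hsplit := Finset.card_filter_add_card_filter_not
    (s := Finset.univ.filter (fun i : Fin (m+1) → Fin N =>
      ∀ l : Fin m, P l (i l.castSucc) (i (Fin.last m))))
    (fun i => Function.Injective i)
  rw [← hQfilter] at hsplit
  have hbadsub : (Finset.univ.filter (fun i : Fin (m+1) → Fin N =>
      ∀ l : Fin m, P l (i l.castSucc) (i (Fin.last m)))).filter
        (fun i => ¬ Function.Injective i)
      ⊆ (Finset.univ.offDiag).biUnion (fun p : Fin (m+1) × Fin (m+1) =>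
          Finset.univ.filter (fun i : Fin (m+1) → Fin N =>
            (∀ l : Fin m, P l (i l.castSucc) (i (Fin.last m))) ∧ i p.1 = i p.2)) := by
    intro i hi
    simp only [Finset.mem_filter, Finset.mem_univ, true_and] at hi
    obtain ⟨hQi, hnI⟩ := hi
    obtain ⟨a, b, hab_eq, hab_ne⟩ := Function.not_injective_iff.mp hnI
    rw [Finset.mem_biUnion]
    exact ⟨(a, b), Finset.mem_offDiag.mpr ⟨Finset.mem_univ _, Finset.mem_univ _, hab_ne⟩,
      Finset.mem_filter.mpr ⟨Finset.mem_univ _, hQi, hab_eq⟩⟩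
  have hbad : (((Finset.univ.filter (fun i : Fin (m+1) → Fin N =>
      ∀ l : Fin m, P l (i l.castSucc) (i (Fin.last m)))).filter
        (fun i => ¬ Function.Injective i)).card : ℝ)
      ≤ ((m:ℝ)+1)^2 * ((N:ℝ) * (C * X) ^ (m - 1)) := by
    have h1 := (Finset.card_le_card hbadsub).trans Finset.card_biUnion_le
    have hCX0 : (0:ℝ) ≤ (N:ℝ) * (C * X) ^ (m - 1) := by positivity
    have h2 : (((Finset.univ.filter (fun i : Fin (m+1) → Fin N =>
          ∀ l : Fin m, P l (i l.castSucc) (i (Fin.last m)))).filter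
            (fun i => ¬ Function.Injective i)).card : ℝ)
        ≤ ∑ p ∈ (Finset.univ : Finset (Fin (m+1))).offDiag,
            ((Finset.univ.filter (fun i : Fin (m+1) → Fin N =>
              (∀ l : Fin m, P l (i l.castSucc) (i (Fin.last m))) ∧ i p.1 = i p.2)).card : ℝ) := by
      exact_mod_cast h1
    refine h2.trans ?_
    have h3 := Finset.sum_le_card_nsmul ((Finset.univ : Finset (Fin (m+1))).offDiag)
      (fun p => ((Finset.univ.filter (fun i : Fin (m+1) → Fin N =>
          (∀ l : Fin m, P l (i l.castSucc) (i (Fin.last m))) ∧ i p.1 = i p.2)).card : ℝ))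
      ((N:ℝ) * (C * X) ^ (m - 1))
      (fun p hp => card_filter_pair_le m N P p.1 p.2 (Finset.mem_offDiag.mp hp).2.2
        (C * X) (mul_nonneg hC0.le hXpos.le) (fun l j => hBa l j))
    refine h3.trans ?_
    rw [nsmul_eq_mul]
    have hoff : ((Finset.univ : Finset (Fin (m+1))).offDiag.card) ≤ (m+1)^2 := by
      rw [Finset.offDiag_card]
      simp only [Finset.card_univ, Fintype.card_fin]
      calc (m+1)*(m+1) - (m+1) ≤ (m+1)*(m+1) := Nat.sub_le _ _
        _ = (m+1)^2 := (pow_two (m+1)).symm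
    have hoffR : (((Finset.univ : Finset (Fin (m+1))).offDiag.card : ℕ) : ℝ)
        ≤ ((m:ℝ)+1)^2 := by
      calc (((Finset.univ : Finset (Fin (m+1))).offDiag.card : ℕ) : ℝ)
          ≤ (((m+1)^2 : ℕ) : ℝ) := by exact_mod_cast hoff
        _ = ((m:ℝ)+1)^2 := by push_cast; ring
    exact mul_le_mul_of_nonneg_right hoffR hCX0
  -- combine the counts
  set L : ℝ := ∏ i, 2 * s i with hL_def
  have hFsplit : ((Finset.univ.filter (fun i : Fin (m + 1) → Fin N =>
      Function.Injective i ∧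
        ∀ l : Fin m, nid (x (i l.castSucc) - x (i (Fin.last m))) ≤ s l / (N : ℝ) ^ β)).card : ℝ)
      = ((Finset.univ.filter (fun i : Fin (m+1) → Fin N =>
          ∀ l : Fin m, P l (i l.castSucc) (i (Fin.last m)))).card : ℝ)
        - (((Finset.univ.filter (fun i : Fin (m+1) → Fin N =>
          ∀ l : Fin m, P l (i l.castSucc) (i (Fin.last m)))).filter
            (fun i => ¬ Function.Injective i)).card : ℝ) := by
    have h := congrArg (fun n : ℕ => (n:ℝ)) hsplit
    push_cast at h
    linarith
  have key : |((Finset.univ.filter (fun i : Fin (m + 1) → Fin N =>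
      Function.Injective i ∧
        ∀ l : Fin m, nid (x (i l.castSucc) - x (i (Fin.last m))) ≤ s l / (N : ℝ) ^ β)).card : ℝ)
        - (N:ℝ) * Q|
      ≤ (N:ℝ) * (m * (6 * ((N:ℝ) * disc x N)) * (C * X) ^ (m - 1))
        + ((m:ℝ)+1)^2 * ((N:ℝ) * (C * X) ^ (m - 1)) := by
    have e : ((Finset.univ.filter (fun i : Fin (m + 1) → Fin N =>
        Function.Injective i ∧
          ∀ l : Fin m, nid (x (i l.castSucc) - x (i (Fin.last m))) ≤ s l / (N : ℝ) ^ β)).card : ℝ)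
          - (N:ℝ) * Q
        = (((Finset.univ.filter (fun i : Fin (m+1) → Fin N =>
            ∀ l : Fin m, P l (i l.castSucc) (i (Fin.last m)))).card : ℝ) - (N:ℝ) * Q)
          - (((Finset.univ.filter (fun i : Fin (m+1) → Fin N =>
            ∀ l : Fin m, P l (i l.castSucc) (i (Fin.last m)))).filter
              (fun i => ¬ Function.Injective i)).card : ℝ) := by
      rw [hFsplit]; ring
    rw [e]
    refine (abs_sub _ _).trans ?_
    have habs1 : |((Finset.univ.filter (fun i : Fin (m+1) → Fin N =>
        ∀ l : Fin m, P l (i l.castSucc) (i (Fin.last m)))).card : ℝ) - (N:ℝ) * Q|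
        ≤ (N:ℝ) * (m * (6 * ((N:ℝ) * disc x N)) * (C * X) ^ (m - 1)) := by
      rw [hG]; exact hsum
    have habs2 : |(((Finset.univ.filter (fun i : Fin (m+1) → Fin N =>
        ∀ l : Fin m, P l (i l.castSucc) (i (Fin.last m)))).filter
          (fun i => ¬ Function.Injective i)).card : ℝ)|
        ≤ ((m:ℝ)+1)^2 * ((N:ℝ) * (C * X) ^ (m - 1)) := by
      rw [abs_of_nonneg (Nat.cast_nonneg _)]; exact hbad
    linarith
  -- rpow algebra
  have hW : X ^ (m-1) = (N:ℝ) ^ ((1-β)*((m:ℝ)-1)) := by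
    rw [hX_def, ← Real.rpow_natCast ((N:ℝ) ^ ((1:ℝ)-β)) (m-1), ← Real.rpow_mul hNr.le]
    congr 1
    rw [Nat.cast_sub hm, Nat.cast_one]
  have e1 : (N:ℝ) * (N:ℝ) ^ ((1-β)*((m:ℝ)-1)) = (N:ℝ) ^ ((1:ℝ) + (1-β)*((m:ℝ)-1)) := by
    rw [Real.rpow_add hNr, Real.rpow_one]
  have hNrW1 : (N:ℝ) * (N:ℝ) ^ ((1-β)*((m:ℝ)-1)) / (N:ℝ) ^ ((m + 1 : ℝ) - m * β)
      = (N:ℝ) ^ (β - 1) := by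
    rw [e1, ← Real.rpow_sub hNr]
    congr 1
    ring
  have hNrW2 : (N:ℝ) * ((N:ℝ) * (N:ℝ) ^ ((1-β)*((m:ℝ)-1))) / (N:ℝ) ^ ((m + 1 : ℝ) - m * β)
      = (N:ℝ) ^ β := by
    have e3 : (N:ℝ) * ((N:ℝ) * (N:ℝ) ^ ((1-β)*((m:ℝ)-1)))
        = (N:ℝ) ^ ((1:ℝ) + ((1:ℝ) + (1-β)*((m:ℝ)-1))) := by
      rw [Real.rpow_add hNr 1 ((1:ℝ) + (1-β)*((m:ℝ)-1)), Real.rpow_one,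
        Real.rpow_add hNr 1 ((1-β)*((m:ℝ)-1)), Real.rpow_one]
    rw [e3, ← Real.rpow_sub hNr]
    congr 1
    ring
  have hXm : (N:ℝ) * X ^ m = (N:ℝ) ^ ((m + 1 : ℝ) - m * β) := by
    have h1 : X ^ m = (N:ℝ) ^ ((1-β)*(m:ℝ)) := by
      rw [hX_def, ← Real.rpow_natCast ((N:ℝ) ^ ((1:ℝ)-β)) m, ← Real.rpow_mul hNr.le]
    have h2 : (N:ℝ) * (N:ℝ) ^ ((1-β)*(m:ℝ)) = (N:ℝ) ^ ((1:ℝ) + (1-β)*(m:ℝ)) := by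
      rw [Real.rpow_add hNr, Real.rpow_one]
    rw [h1, h2]
    congr 1
    ring
  have hNppos : (0:ℝ) < (N:ℝ) ^ ((m + 1 : ℝ) - m * β) := Real.rpow_pos_of_pos hNr _
  have hQval : (N:ℝ) * Q = L * (N:ℝ) ^ ((m + 1 : ℝ) - m * β) := by
    have h1 : Q = L * X ^ m := by
      rw [hQ_def, hL_def, Finset.prod_mul_distrib, Finset.prod_const, Finset.card_univ,
        Fintype.card_fin]
    rw [h1, ← hXm]
    ring
  have hLdiv : L = (N:ℝ) * Q / (N:ℝ) ^ ((m + 1 : ℝ) - m * β) := by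
    rw [hQval, mul_div_cancel_right₀ _ hNppos.ne']
  have hR : Rcorr x m β s N = ((Finset.univ.filter (fun i : Fin (m + 1) → Fin N =>
      Function.Injective i ∧
        ∀ l : Fin m, nid (x (i l.castSucc) - x (i (Fin.last m))) ≤ s l / (N : ℝ) ^ β)).card : ℝ)
      / (N:ℝ) ^ ((m + 1 : ℝ) - m * β) := rfl
  calc |Rcorr x m β s N - L|
      = |((Finset.univ.filter (fun i : Fin (m + 1) → Fin N =>
          Function.Injective i ∧
            ∀ l : Fin m, nid (x (i l.castSucc) - x (i (Fin.last m))) ≤ s l / (N : ℝ) ^ β)).card : ℝ)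
          - (N:ℝ) * Q| / (N:ℝ) ^ ((m + 1 : ℝ) - m * β) := by
        rw [hR, hLdiv, div_sub_div_same, abs_div, abs_of_pos hNppos]
    _ ≤ ((N:ℝ) * (m * (6 * ((N:ℝ) * disc x N)) * (C * X) ^ (m - 1))
          + ((m:ℝ)+1)^2 * ((N:ℝ) * (C * X) ^ (m - 1))) / (N:ℝ) ^ ((m + 1 : ℝ) - m * β) := by
        gcongr
    _ = C ^ (m - 1) * ((m+1)^2 * (N:ℝ) ^ (β - 1) + 6 * m * ((N:ℝ) ^ β * disc x N)) := by
        have expand2 : ((N:ℝ) * (m * (6 * ((N:ℝ) * disc x N)) * (C * X) ^ (m - 1))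
              + ((m:ℝ)+1)^2 * ((N:ℝ) * (C * X) ^ (m - 1))) / (N:ℝ) ^ ((m + 1 : ℝ) - m * β)
            = (6 * m * disc x N * C ^ (m-1))
                * ((N:ℝ) * ((N:ℝ) * (N:ℝ) ^ ((1-β)*((m:ℝ)-1))) / (N:ℝ) ^ ((m + 1 : ℝ) - m * β))
              + (((m:ℝ)+1)^2 * C ^ (m-1))
                * ((N:ℝ) * (N:ℝ) ^ ((1-β)*((m:ℝ)-1)) / (N:ℝ) ^ ((m + 1 : ℝ) - m * β)) := by
          rw [mul_pow, hW]; ring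
        rw [expand2, hNrW2, hNrW1]
        ring

end Stmt8Aux

/-- if `D_N(x) = o(N^{-(1-ε)})` for some `0 < ε < 1`, then for every `k ≥ 2` and
every `β` with `0 < β ≤ 1 - ε` the sequence has `(k,β)`-Poissonian box correlations. -/
theorem stmt8 (x : ℕ → ℝ) (hx : ∀ n, x n ∈ Set.Icc (0 : ℝ) 1)
    (ε : ℝ) (hε : 0 < ε) (hε1 : ε < 1)
    (hD : (fun N : ℕ => disc x N) =o[atTop] fun N : ℕ => (N : ℝ) ^ (-(1 - ε)))
    (m : ℕ) (hm : 1 ≤ m) (β : ℝ) (hβ : 0 < β) (hβε : β ≤ 1 - ε)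
    (s : Fin m → ℝ) (hs : ∀ i, 0 < s i) :
    Tendsto (fun N => Rcorr x m β s N) atTop (nhds (∏ i, 2 * s i)) := by
  classical
  set L : ℝ := ∏ i, 2 * s i with hL_def
  set C : ℝ := 6 + ∑ l, 2 * s l with hC_def
  have h1 : Tendsto (fun N : ℕ => (N:ℝ) ^ β * disc x N) atTop (nhds 0) := by
    have ho : (fun N : ℕ => (N:ℝ) ^ β * disc x N) =o[atTop]
        (fun N : ℕ => (N:ℝ) ^ β * (N:ℝ) ^ (-(1-ε))) :=
      (isBigO_refl (fun N : ℕ => (N:ℝ) ^ β) atTop).mul_isLittleO hD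
    have hbO : (fun N : ℕ => (N:ℝ) ^ β * (N:ℝ) ^ (-(1-ε))) =O[atTop]
        (fun _ : ℕ => (1:ℝ)) := by
      rw [Asymptotics.isBigO_iff]
      refine ⟨1, ?_⟩
      filter_upwards [Filter.eventually_ge_atTop 1] with N hN
      have hN1 : (1:ℝ) ≤ (N:ℝ) := by exact_mod_cast hN
      have hN0 : (0:ℝ) < (N:ℝ) := by linarith
      simp only [Real.norm_eq_abs, norm_one, mul_one]
      rw [← Real.rpow_add hN0]
      rw [abs_of_nonneg (Real.rpow_nonneg hN0.le _)]
      exact Real.rpow_le_one_of_one_le_of_nonpos hN1 (by linarith)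
    exact (isLittleO_one_iff ℝ).mp (ho.trans_isBigO hbO)
  have h2 : Tendsto (fun N : ℕ => (N:ℝ) ^ (β - 1)) atTop (nhds 0) := by
    have h' := (tendsto_rpow_neg_atTop (y := 1 - β) (by linarith)).comp
      (tendsto_natCast_atTop_atTop (R := ℝ))
    simpa [Function.comp_def, neg_sub] using h'
  have herr : Tendsto (fun N : ℕ => C ^ (m-1) *
      (((m:ℝ)+1)^2 * (N:ℝ) ^ (β-1) + 6 * (m:ℝ) * ((N:ℝ)^β * disc x N))) atTop (nhds 0) := by
    have h3 := ((h2.const_mul (((m:ℝ)+1)^2)).add (h1.const_mul (6*(m:ℝ)))).const_mul (C^(m-1))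
    simpa [mul_assoc] using h3
  have hbound : ∀ᶠ N : ℕ in atTop, ‖Rcorr x m β s N - L‖ ≤ C ^ (m-1) *
      (((m:ℝ)+1)^2 * (N:ℝ) ^ (β-1) + 6 * (m:ℝ) * ((N:ℝ)^β * disc x N)) := by
    have hev2 : ∀ᶠ N : ℕ in atTop, ∀ l : Fin m, s l / (N:ℝ)^β < 1/2 := by
      rw [eventually_all]
      intro l
      have htd : Tendsto (fun N : ℕ => s l / (N:ℝ)^β) atTop (nhds 0) := by
        apply Tendsto.div_atTop tendsto_const_nhds
        exact (tendsto_rpow_atTop hβ).comp (tendsto_natCast_atTop_atTop (R := ℝ))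
      exact htd.eventually_lt_const (by norm_num)
    have hev3 : ∀ᶠ N : ℕ in atTop, (N:ℝ)^β * disc x N ≤ 1 := by
      filter_upwards [h1.eventually_lt_const (by norm_num : (0:ℝ) < 1)] with N hN
      exact hN.le
    filter_upwards [eventually_gt_atTop 0, hev2, hev3] with N hA hB hC'
    have := Stmt8Aux.main_estimate x hx m hm β s hs N hA hB hC'
    rw [Real.norm_eq_abs]
    calc |Rcorr x m β s N - L| ≤
        (6 + ∑ l, 2 * s l) ^ (m - 1) *
          ((m+1)^2 * (N:ℝ) ^ (β - 1) + 6 * m * ((N:ℝ) ^ β * disc x N)) := this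
      _ = C ^ (m-1) * (((m:ℝ)+1)^2 * (N:ℝ) ^ (β-1) + 6 * (m:ℝ) * ((N:ℝ)^β * disc x N)) := by
          rw [hC_def]
  have hfin : Tendsto (fun N => Rcorr x m β s N - L) atTop (nhds 0) :=
    squeeze_zero_norm' hbound herr
  have hfin2 := hfin.add (tendsto_const_nhds (x := L) (f := atTop))
  simpa using hfin2
end

section
/- Let (x_n) be a sequence in [0,1) and suppose there exist Z ∈ ℕ, γ > 0 and infinitely many N such that the finite point set x_1,...,x_N has at most Z distinct gap lengths (distances between neighboring elements in the ordered set, including the wrap-around gap). Then for every k ≥ 2, the sequence does not have (k,1)-Poissonian box correlations. -/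
open MeasureTheory Filter
open scoped Classical

/-- The point set `x_1,…,x_N` has at most `Z` distinct gap lengths: for some ordering
`x_{σ(0)} ≤ ⋯ ≤ x_{σ(N-1)}` of the points, the set of distances between neighboring
elements (including the wrap-around gap) has at most `Z` elements. -/
def AtMostZGaps (x : ℕ → ℝ) (N Z : ℕ) : Prop :=
  ∃ σ : Equiv.Perm (Fin N),
    (∀ i j : Fin N, i ≤ j → x (σ i) ≤ x (σ j)) ∧
    Set.ncard {d : ℝ |
      (∃ i j : Fin N, (j : ℕ) = (i : ℕ) + 1 ∧ d = nid (x (σ j) - x (σ i))) ∨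
      (∃ i j : Fin N, (i : ℕ) = 0 ∧ (j : ℕ) = N - 1 ∧ d = nid (x (σ i) - x (σ j)))} ≤ Z

lemma nid_le_int (x : ℝ) (k : ℤ) : nid x ≤ |x - k| := by
  by_contra h
  push_neg at h
  have h1 : |x - round x| ≤ 1/2 := abs_sub_round x
  have h2 : |x - (k:ℝ)| < 1/2 := lt_of_lt_of_le h h1
  have h3 : |(round x : ℝ) - k| < 1 := by
    calc |(round x : ℝ) - k| ≤ |(round x:ℝ) - x| + |x - k| := abs_sub_le _ _ _
    _ < 1 := by rw [abs_sub_comm]; linarith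
  have h4 : round x = k := by
    have h5 : |((round x - k : ℤ) : ℝ)| < 1 := by push_cast; exact h3
    have h6 : |round x - k| < 1 := by exact_mod_cast h5
    have := abs_lt.mp h6; omega
  subst h4
  exact absurd h (lt_irrefl _)

lemma nid_triangle (a b : ℝ) : nid (a + b) ≤ nid a + nid b := by
  calc nid (a+b) ≤ |a + b - ((round a + round b : ℤ):ℝ)| := nid_le_int _ _
  _ = |(a - round a) + (b - round b)| := by push_cast; ring_nf
  _ ≤ _ := abs_add_le _ _

lemma nid_tri3 (A B C : ℝ) : nid (A - C) ≤ nid (A - B) + nid (B - C) := by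
  have := nid_triangle (A - B) (B - C)
  simpa using this

/-- the test vector -/
noncomputable def svec (m : ℕ) (a S : ℝ) : Fin m → ℝ := fun i => if (i:ℕ) = 0 then a else S

/-- the counting set -/
noncomputable def Tset (x : ℕ → ℝ) (m N : ℕ) (s : Fin m → ℝ) : Finset (Fin (m + 1) → Fin N) :=
  Finset.univ.filter (fun i => Function.Injective i ∧
    ∀ l : Fin m, nid (x (i l.castSucc) - x (i (Fin.last m))) ≤ s l / (N:ℝ))

lemma Rcorr_one (x : ℕ → ℝ) (m N : ℕ) (s : Fin m → ℝ) :
    Rcorr x m 1 s N = ((Tset x m N s).card : ℝ) / N := by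
  unfold Rcorr Tset
  rw [show ((m:ℝ) + 1) - (m:ℝ) * 1 = 1 by ring, Real.rpow_one]

lemma Zpos (x : ℕ → ℝ) (N Z : ℕ) (hN : 1 ≤ N) (hg : AtMostZGaps x N Z) : 1 ≤ Z := by
  obtain ⟨σ, hsort, hcard⟩ := hg
  set G : Set ℝ := {d : ℝ |
      (∃ i j : Fin N, (j : ℕ) = (i : ℕ) + 1 ∧ d = nid (x (σ j) - x (σ i))) ∨
      (∃ i j : Fin N, (i : ℕ) = 0 ∧ (j : ℕ) = N - 1 ∧ d = nid (x (σ i) - x (σ j)))} with hG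
  have hfin : G.Finite := by
    apply Set.Finite.subset (Set.finite_range
      (fun p : Fin N × Fin N => nid (x (σ p.1) - x (σ p.2))))
    rintro d (⟨i, j, _, rfl⟩ | ⟨i, j, _, _, rfl⟩)
    · exact ⟨(j, i), rfl⟩
    · exact ⟨(i, j), rfl⟩
  have hne : G.Nonempty := by
    refine ⟨nid (x (σ ⟨0, by omega⟩) - x (σ ⟨N-1, by omega⟩)), Or.inr ?_⟩
    exact ⟨⟨0, by omega⟩, ⟨N-1, by omega⟩, rfl, rfl, rfl⟩
  have := (Set.ncard_pos hfin).mpr hne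
  omega

open Fin.NatCast in
lemma key (x : ℕ → ℝ) (hx : ∀ n, x n ∈ Set.Ico (0 : ℝ) 1) (Z m N : ℕ) (hm : 1 ≤ m)
    (hZ1 : 1 ≤ Z) (hN : m + 4 * Z + 2 ≤ N) (hg : AtMostZGaps x N Z) :
    ∃ t : ℝ, 0 ≤ t ∧ t ≤ 2 * Z ∧ ∀ a b : ℝ, a < t → t ≤ b →
      ((Tset x m N (svec m a (4 * m * Z))).card : ℝ) + (N : ℝ) / (2 * Z)
        ≤ ((Tset x m N (svec m b (4 * m * Z))).card : ℝ) := by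
  obtain ⟨σ, hsort, hcard⟩ := hg
  haveI : NeZero N := ⟨by omega⟩
  haveI : NeZero m := ⟨by omega⟩
  have hNR : (0:ℝ) < N := by exact_mod_cast Nat.pos_of_ne_zero (by omega)
  have hZR : (0:ℝ) < Z := by exact_mod_cast hZ1
  have hmR : (1:ℝ) ≤ m := by exact_mod_cast hm
  set g : Fin N → ℝ := fun i => nid (x (σ (i+1)) - x (σ i)) with hgdef
  have hg0 : ∀ i, 0 ≤ g i := fun i => nid_nonneg _
  set f : ℕ → ℝ := fun n => x (σ ((n : Fin N))) with hfdef
  have hgf : ∀ i : Fin N, g i = nid (f (i.val + 1) - f i.val) := by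
    intro i
    simp only [hgdef, hfdef]
    congr 2
    · congr 1; push_cast; rfl
    · congr 2; rw [Fin.cast_val_eq_self]
  have hcast_add : ∀ (i : Fin N) (c : ℕ), i + (c : Fin N) = ((i.val + c : ℕ) : Fin N) := by
    intro i c
    conv_lhs => rw [← Fin.cast_val_eq_self i]
    push_cast
    ring
  have hplus1 : ∀ i : Fin N, i.val + 1 < N → ((i + 1 : Fin N)).val = i.val + 1 := by
    intro i hi
    have e : (i + 1 : Fin N) = ((i.val + 1 : ℕ) : Fin N) := by
      have := hcast_add i 1
      simpa using this
    rw [e, Fin.val_cast_of_lt hi]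
  have hwrap : ∀ i : Fin N, i.val + 1 = N → (i + 1 : Fin N) = 0 := by
    intro i hi
    have e : (i + 1 : Fin N) = ((i.val + 1 : ℕ) : Fin N) := by
      have := hcast_add i 1
      simpa using this
    rw [e, hi, Fin.natCast_self]
  -- sum of gaps is at most 1
  have hsum : ∑ i : Fin N, g i ≤ 1 := by
    have e1 : ∑ i : Fin N, g i = ∑ n ∈ Finset.range N, nid (f (n+1) - f n) := by
      rw [← Fin.sum_univ_eq_sum_range (fun n => nid (f (n+1) - f n)) N]
      exact Finset.sum_congr rfl (fun i _ => hgf i)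
    rw [e1, show N = (N-1)+1 by omega, Finset.sum_range_succ]
    have e2 : ∑ n ∈ Finset.range (N-1), nid (f (n+1) - f n)
        ≤ ∑ n ∈ Finset.range (N-1), (f (n+1) - f n) := by
      apply Finset.sum_le_sum
      intro n hn
      have hn' : n + 1 < N := by have := Finset.mem_range.mp hn; omega
      have hmono : f n ≤ f (n+1) := by
        apply hsort
        rw [Fin.le_def, Fin.val_cast_of_lt (by omega), Fin.val_cast_of_lt hn']
        omega
      calc nid (f (n+1) - f n) ≤ |f (n+1) - f n| := nid_le_abs _
      _ = f (n+1) - f n := abs_of_nonneg (by linarith)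
    rw [Finset.sum_range_sub f (N-1)] at e2
    have e3 : nid (f ((N-1)+1) - f (N-1)) ≤ f ((N-1)+1) - f (N-1) + 1 := by
      have h1 : 0 ≤ f ((N-1)+1) := (hx _).1
      have h2 : f (N-1) < 1 := (hx _).2
      calc nid (f ((N-1)+1) - f (N-1)) ≤ |f ((N-1)+1) - f (N-1) - ((-1 : ℤ):ℝ)| :=
        nid_le_int _ _
      _ = f ((N-1)+1) - f (N-1) + 1 := by rw [abs_of_nonneg (by push_cast; linarith)]; push_cast; ring
    have e4 : f 0 ≤ f (N-1) := by
      apply hsort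
      rw [Fin.le_def, Fin.val_cast_of_lt (by omega), Fin.val_cast_of_lt (by omega)]
      omega
    have e5 : 0 ≤ f 0 := (hx _).1
    have e6 : f ((N-1)+1) = f 0 := by
      have : ((((N-1)+1 : ℕ)) : Fin N) = ((0:ℕ) : Fin N) := by
        rw [show (N-1)+1 = N by omega]
        simp
      simp only [hfdef, this]
    linarith
  -- the finset of gap values has at most Z elements
  set Gfin : Finset ℝ := Finset.image g Finset.univ with hGfin
  have hGcard : Gfin.card ≤ Z := by
    set G : Set ℝ := {d : ℝ |
        (∃ i j : Fin N, (j : ℕ) = (i : ℕ) + 1 ∧ d = nid (x (σ j) - x (σ i))) ∨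
        (∃ i j : Fin N, (i : ℕ) = 0 ∧ (j : ℕ) = N - 1 ∧ d = nid (x (σ i) - x (σ j)))} with hG
    have hfin : G.Finite := by
      apply Set.Finite.subset (Set.finite_range
        (fun p : Fin N × Fin N => nid (x (σ p.1) - x (σ p.2))))
      rintro d (⟨i, j, _, rfl⟩ | ⟨i, j, _, _, rfl⟩)
      · exact ⟨(j, i), rfl⟩
      · exact ⟨(i, j), rfl⟩
    have hsub : ↑Gfin ⊆ G := by
      intro d hd
      simp only [hGfin, Finset.coe_image, Set.mem_image] at hd
      obtain ⟨i, -, rfl⟩ := hd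
      by_cases hi : i.val + 1 < N
      · left
        exact ⟨i, i + 1, hplus1 i hi, rfl⟩
      · right
        have hival : i.val = N - 1 := by have := i.isLt; omega
        have hi1 : i + 1 = 0 := hwrap i (by omega)
        refine ⟨0, i, rfl, hival, ?_⟩
        simp only [hgdef, hi1]
    calc Gfin.card = (↑Gfin : Set ℝ).ncard := (Set.ncard_coe_finset _).symm
    _ ≤ G.ncard := Set.ncard_le_ncard hsub hfin
    _ ≤ Z := hcard
  -- pigeonhole: a frequent gap value d
  obtain ⟨d, hdG, hdcard⟩ : ∃ d ∈ Gfin,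
      N / Z ≤ (Finset.univ.filter (fun i : Fin N => g i = d)).card := by
    apply Finset.exists_le_card_fiber_of_mul_le_card_of_maps_to
    · exact fun i _ => Finset.mem_image_of_mem g (Finset.mem_univ i)
    · exact ⟨g 0, Finset.mem_image_of_mem g (Finset.mem_univ 0)⟩
    · rw [Finset.card_univ, Fintype.card_fin]
      calc Gfin.card * (N / Z) ≤ Z * (N / Z) := by
            exact Nat.mul_le_mul_right _ hGcard
      _ ≤ N := by rw [mul_comm]; exact Nat.div_mul_le_self N Z
  set A : Finset (Fin N) := Finset.univ.filter (fun i : Fin N => g i = d) with hA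
  have hd0 : 0 ≤ d := by
    obtain ⟨i, -, rfl⟩ := Finset.mem_image.mp hdG
    exact hg0 i
  have hq1 : (1:ℝ) ≤ (N:ℝ)/(4*Z) := by
    rw [le_div_iff₀ (by positivity)]
    have h4Z : 4*Z ≤ N := by omega
    calc (1:ℝ)*(4*Z) = ((4*Z : ℕ):ℝ) := by push_cast; ring
    _ ≤ N := by exact_mod_cast h4Z
  have hqZ : (N:ℝ)/Z = 4*((N:ℝ)/(4*Z)) := by field_simp
  have hq2 : (N:ℝ)/(2*Z) = 2*((N:ℝ)/(4*Z)) := by field_simp; ring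
  have hAc1 : (N:ℝ)/Z - 1 ≤ A.card := by
    have h1 : (N:ℝ) < Z * ((N / Z : ℕ):ℝ) + Z := by
      have hmod := Nat.div_add_mod N Z
      have hlt : N % Z < Z := Nat.mod_lt N (by omega)
      have : N < Z * (N / Z) + Z := by omega
      calc (N:ℝ) < ((Z * (N / Z) + Z : ℕ):ℝ) := by exact_mod_cast this
      _ = Z * ((N / Z : ℕ):ℝ) + Z := by push_cast; ring
    have h2 : ((N / Z : ℕ):ℝ) ≤ A.card := by exact_mod_cast hdcard
    have h1' : (N:ℝ)/Z < ((N / Z : ℕ):ℝ) + 1 := by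
      rw [div_lt_iff₀ hZR]
      nlinarith
    linarith
  have hAcR : (N:ℝ) / (2*Z) ≤ A.card := by
    rw [hq2]; linarith
  have hApos : (0:ℝ) < A.card := lt_of_lt_of_le (by positivity) hAcR
  have hdA : d * A.card ≤ 1 := by
    have e1 : ∑ i ∈ A, g i = A.card * d := by
      rw [Finset.sum_congr rfl (fun i hi => (Finset.mem_filter.mp hi).2)]
      rw [Finset.sum_const, nsmul_eq_mul]
    have e2 : ∑ i ∈ A, g i ≤ ∑ i : Fin N, g i :=
      Finset.sum_le_sum_of_subset_of_nonneg (Finset.subset_univ _) (fun i _ _ => hg0 i)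
    rw [mul_comm]
    rw [e1] at e2
    linarith
  have hdle : (N:ℝ) * d ≤ 2 * Z := by
    have h5 : (N:ℝ)/(2*Z) * d ≤ 1 := by
      have := mul_le_mul_of_nonneg_right hAcR hd0
      nlinarith
    have h6 := mul_le_mul_of_nonneg_right h5 (le_of_lt (show (0:ℝ) < 2*Z by positivity))
    calc (N:ℝ)*d = (N/(2*Z)*d)*(2*Z) := by field_simp
    _ ≤ 1*(2*Z) := h6
    _ = 2*Z := one_mul _
  -- the window function
  set S : ℝ := 4 * m * Z with hS
  have hSpos : (0:ℝ) < S := by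
    have : (1:ℝ) ≤ Z := by exact_mod_cast hZ1
    rw [hS]; nlinarith
  set w : Fin N → ℝ := fun i => ∑ l ∈ Finset.range m, g (i + (l : Fin N)) with hw
  have hw0 : ∀ i, 0 ≤ w i := fun i => Finset.sum_nonneg (fun l _ => hg0 _)
  have hwsum : ∑ i : Fin N, w i ≤ m := by
    have e1 : ∑ i : Fin N, w i = ∑ l ∈ Finset.range m, ∑ i : Fin N, g (i + (l : Fin N)) :=
      Finset.sum_comm
    have e2 : ∀ c : Fin N, ∑ i : Fin N, g (i + c) = ∑ i : Fin N, g i := by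
      intro c
      exact Fintype.sum_equiv (Equiv.addRight c) _ _ (fun i => rfl)
    rw [e1]
    calc ∑ l ∈ Finset.range m, ∑ i : Fin N, g (i + (l : Fin N))
        = ∑ l ∈ Finset.range m, ∑ i : Fin N, g i :=
          Finset.sum_congr rfl (fun l _ => e2 _)
    _ = m * ∑ i : Fin N, g i := by rw [Finset.sum_const, Finset.card_range, nsmul_eq_mul]
    _ ≤ m * 1 := by
        apply mul_le_mul_of_nonneg_left hsum (by positivity)
    _ = m := mul_one _
  set B : Finset (Fin N) := Finset.univ.filter (fun i : Fin N => S / N < w i) with hB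
  have hBcard : (B.card : ℝ) ≤ (N:ℝ) / (4 * Z) := by
    have h1 : (B.card : ℝ) * (S / N) ≤ ∑ i ∈ B, w i := by
      have := Finset.card_nsmul_le_sum B w (S/N)
        (fun i hi => le_of_lt (Finset.mem_filter.mp hi).2)
      simpa [nsmul_eq_mul] using this
    have h2 : ∑ i ∈ B, w i ≤ ∑ i : Fin N, w i :=
      Finset.sum_le_sum_of_subset_of_nonneg (Finset.subset_univ _) (fun i _ _ => hw0 i)
    have h3 : (B.card : ℝ) * (S / N) ≤ m := le_trans h1 (le_trans h2 hwsum)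
    rw [hS] at h3
    rw [le_div_iff₀ (by positivity)]
    have hNne : (N:ℝ) ≠ 0 := ne_of_gt hNR
    have h4 : (B.card : ℝ) * (4 * m * Z) ≤ m * N := by
      have := mul_le_mul_of_nonneg_right h3 (le_of_lt hNR)
      calc (B.card : ℝ) * (4 * m * Z) = (B.card : ℝ) * (4 * m * Z / N) * N := by
            field_simp
      _ ≤ m * N := this
    have h5 : (m:ℝ) * ((B.card:ℝ) * (4*Z)) ≤ (m:ℝ) * (N:ℝ) := by
      have e : (B.card : ℝ) * (4 * m * Z) = m * (B.card * (4*Z)) := by ring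
      rw [e] at h4
      exact h4
    exact le_of_mul_le_mul_left h5 (lt_of_lt_of_le zero_lt_one hmR)
  set Good : Finset (Fin N) := A \ B with hGoodDef
  have hGoodB : ∀ i ∈ Good, ¬ (S / N < w i) := by
    intro i hi
    have := (Finset.mem_sdiff.mp hi).2
    intro hcon
    exact this (Finset.mem_filter.mpr ⟨Finset.mem_univ _, hcon⟩)
  have hGoodA : ∀ i ∈ Good, g i = d := by
    intro i hi
    exact (Finset.mem_filter.mp (Finset.mem_sdiff.mp hi).1).2
  have hGood : (N:ℝ) / (2 * Z) ≤ Good.card := by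
    have h1 : A ⊆ Good ∪ B := by
      intro i hi
      by_cases hb : i ∈ B
      · exact Finset.mem_union_right _ hb
      · exact Finset.mem_union_left _ (Finset.mem_sdiff.mpr ⟨hi, hb⟩)
    have h2 : (A.card : ℝ) ≤ Good.card + B.card := by
      calc (A.card : ℝ) ≤ ((Good ∪ B).card : ℝ) := by
            exact_mod_cast Finset.card_le_card h1
      _ ≤ Good.card + B.card := by exact_mod_cast Finset.card_union_le _ _
    rw [hq2]
    linarith
  refine ⟨(N:ℝ) * d, by positivity, hdle, ?_⟩
  intro a b hat htb
  have hab : a ≤ b := le_trans (le_of_lt hat) htb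
  have hchain : ∀ (i : Fin N) (c : ℕ),
      nid (x (σ (i + (c : Fin N))) - x (σ i)) ≤ ∑ j ∈ Finset.range c, g (i + (j : Fin N)) := by
    intro i c
    induction c with
    | zero => simp [nid_zero]
    | succ c ih =>
      have hc1 : ((c+1 : ℕ) : Fin N) = (c : Fin N) + 1 := by push_cast; ring
      have e1 : g (i + (c : Fin N)) = nid (x (σ (i + ((c+1:ℕ) : Fin N))) - x (σ (i + (c : Fin N)))) := by
        simp only [hgdef]
        rw [hc1, ← add_assoc]
      calc nid (x (σ (i + ((c+1:ℕ) : Fin N))) - x (σ i))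
          ≤ nid (x (σ (i + ((c+1:ℕ):Fin N))) - x (σ (i + (c:Fin N))))
            + nid (x (σ (i + (c:Fin N))) - x (σ i)) := nid_tri3 _ _ _
        _ ≤ nid (x (σ (i + ((c+1:ℕ):Fin N))) - x (σ (i + (c:Fin N))))
            + ∑ j ∈ Finset.range c, g (i + (j : Fin N)) := add_le_add_right ih _
        _ = ∑ j ∈ Finset.range (c+1), g (i + (j:Fin N)) := by
            rw [Finset.sum_range_succ, ← e1]; ring
  set T : Fin N → (Fin (m+1) → Fin N) :=
    fun i l => σ (i + (((l.val + 1) % (m+1) : ℕ) : Fin N)) with hT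
  have hofs_eq : ∀ l : Fin (m+1), (l.val + 1) % (m+1) = if l.val = m then 0 else l.val + 1 := by
    intro l
    by_cases h : l.val = m
    · simp [h]
    · have hlt : l.val + 1 < m + 1 := by have := l.isLt; omega
      rw [Nat.mod_eq_of_lt hlt]
      simp [h]
  have hofs_lt : ∀ l : Fin (m+1), (l.val + 1) % (m+1) < N := by
    intro l
    have := Nat.mod_lt (l.val+1) (show 0 < m+1 by omega)
    omega
  have hTlast : ∀ i, T i (Fin.last m) = σ i := by
    intro i
    simp only [hT]
    rw [show ((Fin.last m).val + 1) % (m+1) = 0 by simp [Fin.last]]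
    simp
  have hTcast : ∀ i (l : Fin m), T i l.castSucc = σ (i + ((l.val + 1 : ℕ) : Fin N)) := by
    intro i l
    simp only [hT]
    have e : (l.castSucc.val + 1) % (m+1) = l.val + 1 := by
      rw [Fin.coe_castSucc, Nat.mod_eq_of_lt (by have := l.isLt; omega)]
    rw [e]
  have hTinj : ∀ i, Function.Injective (T i) := by
    intro i l l' he
    have h1 : i + (((l.val + 1) % (m+1) : ℕ) : Fin N) = i + (((l'.val + 1) % (m+1) : ℕ) : Fin N) :=
      σ.injective he
    have h2 : (((l.val + 1) % (m+1) : ℕ) : Fin N) = (((l'.val + 1) % (m+1) : ℕ) : Fin N) :=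
      add_left_cancel h1
    have h3 : (l.val + 1) % (m+1) = (l'.val + 1) % (m+1) := by
      have := congrArg Fin.val h2
      rwa [Fin.val_cast_of_lt (hofs_lt l), Fin.val_cast_of_lt (hofs_lt l')] at this
    rw [hofs_eq l, hofs_eq l'] at h3
    apply Fin.ext
    have hl := l.isLt
    have hl' := l'.isLt
    split_ifs at h3 <;> omega
  have hTdist0 : ∀ i, nid (x (T i ((0:Fin m).castSucc)) - x (T i (Fin.last m))) = g i := by
    intro i
    rw [hTcast, hTlast]
    simp only [hgdef]
    norm_num
  have hmemb : ∀ i ∈ Good, T i ∈ Tset x m N (svec m b S) := by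
    intro i hi
    refine Finset.mem_filter.mpr ⟨Finset.mem_univ _, hTinj i, fun l => ?_⟩
    by_cases hl : l = 0
    · subst hl
      rw [hTdist0 i, hGoodA i hi]
      have hsv : svec m b S 0 = b := by simp [svec]
      rw [hsv]
      rw [le_div_iff₀ hNR]
      linarith
    · have hsv : svec m b S l = S := by
        have : (l : ℕ) ≠ 0 := fun hc => hl (by
          apply Fin.ext; simpa using hc)
        simp [svec, this]
      rw [hsv, hTcast, hTlast]
      calc nid (x (σ (i + ((l.val + 1 : ℕ) : Fin N))) - x (σ i))
          ≤ ∑ j ∈ Finset.range (l.val+1), g (i + (j : Fin N)) := hchain i (l.val+1)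
        _ ≤ ∑ j ∈ Finset.range m, g (i + (j : Fin N)) :=
            Finset.sum_le_sum_of_subset_of_nonneg
              (Finset.range_subset_range.mpr (by have := l.isLt; omega))
              (fun j _ _ => hg0 _)
        _ = w i := rfl
        _ ≤ S / N := not_lt.mp (hGoodB i hi)
  have hexcl : ∀ i ∈ Good, T i ∉ Tset x m N (svec m a S) := by
    intro i hi hmem
    obtain ⟨-, -, hcond⟩ := Finset.mem_filter.mp hmem
    have h1 := hcond (0 : Fin m)
    rw [hTdist0 i, hGoodA i hi] at h1
    have h2 : d ≤ a / N := by
      have hsv : svec m a S 0 = a := by simp [svec]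
      rwa [hsv] at h1
    rw [le_div_iff₀ hNR] at h2
    linarith
  have hTinjOn : Set.InjOn T Good := by
    intro i hi i' hi' he
    have h1 : T i (Fin.last m) = T i' (Fin.last m) := by rw [he]
    rw [hTlast, hTlast] at h1
    exact σ.injective h1
  set E := Finset.image T Good with hE
  have hEcard : E.card = Good.card := Finset.card_image_of_injOn hTinjOn
  have hEsub : E ⊆ Tset x m N (svec m b S) := by
    intro t ht
    obtain ⟨i, hi, rfl⟩ := Finset.mem_image.mp ht
    exact hmemb i hi
  have hdisj : Disjoint (Tset x m N (svec m a S)) E := by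
    rw [Finset.disjoint_right]
    intro t ht
    obtain ⟨i, hi, rfl⟩ := Finset.mem_image.mp ht
    exact hexcl i hi
  have hmono : Tset x m N (svec m a S) ⊆ Tset x m N (svec m b S) := by
    intro t ht
    obtain ⟨htu, hinj, hcond⟩ := Finset.mem_filter.mp ht
    refine Finset.mem_filter.mpr ⟨htu, hinj, fun l => le_trans (hcond l) ?_⟩
    apply div_le_div_of_nonneg_right ?_ hNR.le
    simp only [svec]
    split_ifs
    · exact hab
    · exact le_refl _
  have hcount : (Tset x m N (svec m a S)).card + Good.card
      ≤ (Tset x m N (svec m b S)).card := by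
    calc (Tset x m N (svec m a S)).card + Good.card
        = ((Tset x m N (svec m a S)) ∪ E).card := by
          rw [Finset.card_union_of_disjoint hdisj, hEcard]
    _ ≤ (Tset x m N (svec m b S)).card :=
        Finset.card_le_card (Finset.union_subset hmono hEsub)
  have hcountR : ((Tset x m N (svec m a S)).card : ℝ) + (Good.card : ℝ)
      ≤ ((Tset x m N (svec m b S)).card : ℝ) := by exact_mod_cast hcount
  linarith

lemma tendsto_freq_le {u v : ℕ → ℝ} {L L' c : ℝ} (hu : Tendsto u atTop (nhds L))
    (hv : Tendsto v atTop (nhds L')) (h : ∃ᶠ N in atTop, u N + c ≤ v N) : L + c ≤ L' := by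
  by_contra hlt
  push_neg at hlt
  have h1 : Tendsto (fun N => v N - u N) atTop (nhds (L' - L)) := hv.sub hu
  have h2 : ∀ᶠ N in atTop, v N - u N < c := h1.eventually_lt_const (by linarith)
  obtain ⟨N, hN1, hN2⟩ := (h.and_eventually h2).exists
  linarith

lemma prod_svec (m : ℕ) [NeZero m] (c S : ℝ) :
    (∏ i : Fin m, 2 * (svec m c S i)) = 2 * c * (2*S)^(m-1) := by
  rw [← Finset.mul_prod_erase Finset.univ _ (Finset.mem_univ (0 : Fin m))]
  have h0 : svec m c S 0 = c := by simp [svec]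
  have h1 : ∏ i ∈ Finset.univ.erase (0 : Fin m), (2 * svec m c S i)
      = ∏ _i ∈ Finset.univ.erase (0 : Fin m), (2*S) := by
    apply Finset.prod_congr rfl
    intro i hi
    have hne : i ≠ 0 := Finset.ne_of_mem_erase hi
    have hv : (i:ℕ) ≠ 0 := fun hc => hne (Fin.ext (by simpa using hc))
    simp [svec, hv]
  rw [h0, h1, Finset.prod_const, Finset.card_erase_of_mem (Finset.mem_univ _),
    Finset.card_univ, Fintype.card_fin]


set_option maxHeartbeats 1000000 in
/-- if there exist `Z ∈ ℕ`, `γ > 0` and infinitely many `N` such that the point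
set `x_1,…,x_N` has at most `Z` distinct gap lengths, then for every `k ≥ 2` the sequence does
not have `(k,1)`-Poissonian box correlations. -/
theorem stmt10 (x : ℕ → ℝ) (hx : ∀ n, x n ∈ Set.Ico (0 : ℝ) 1)
    (Z : ℕ) (γ : ℝ) (hγ : 0 < γ)
    (hgaps : ∀ M : ℕ, ∃ N : ℕ, M ≤ N ∧ 1 ≤ N ∧ AtMostZGaps x N Z)
    (m : ℕ) (hm : 1 ≤ m) :
    ¬ (∀ s : Fin m → ℝ, (∀ i, 0 < s i) →
        Tendsto (fun N => Rcorr x m 1 s N) atTop (nhds (∏ i, 2 * s i))) := by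
  intro H
  haveI : NeZero m := ⟨by omega⟩
  obtain ⟨N₀, hN₀M, hN₀1, hg₀⟩ := hgaps 1
  have hZ1 : 1 ≤ Z := Zpos x N₀ Z hN₀1 hg₀
  have hZR : (0:ℝ) < Z := by exact_mod_cast hZ1
  have hmR : (1:ℝ) ≤ m := by exact_mod_cast hm
  set S : ℝ := 4 * m * Z with hS
  have hSpos : (0:ℝ) < S := by rw [hS]; nlinarith
  have hZRe : (1:ℝ) ≤ Z := by exact_mod_cast hZ1
  have hSge : (4:ℝ) ≤ S := by
    rw [hS]
    nlinarith [mul_le_mul hmR hZRe one_pos.le (by linarith : (0:ℝ) ≤ m)]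
  set C : ℝ := (2*S)^(m-1) with hC
  have hC1 : (1:ℝ) ≤ C := one_le_pow₀ (by linarith)
  have hCpos : (0:ℝ) < C := by linarith
  set h : ℝ := 1/(12*Z*C) with hh
  have hhpos : 0 < h := by rw [hh]; apply div_pos one_pos; nlinarith
  have hCne : C ≠ 0 := ne_of_gt hCpos
  have hZne : (Z:ℝ) ≠ 0 := ne_of_gt hZR
  clear_value S C h
  set M₀ : ℕ := m + 4*Z + 2 with hM₀
  set P : ℕ → Prop := fun N => M₀ ≤ N ∧ AtMostZGaps x N Z with hP
  have hfreq : ∃ᶠ N in atTop, P N := by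
    rw [frequently_atTop]
    intro a
    obtain ⟨N, h1, h2, h3⟩ := hgaps (max a M₀)
    exact ⟨N, le_trans (le_max_left _ _) h1, le_trans (le_max_right _ _) h1, h3⟩
  have hkey : ∀ N, P N → ∃ t : ℝ, 0 ≤ t ∧ t ≤ 2*Z ∧ ∀ a b : ℝ, a < t → t ≤ b →
      ((Tset x m N (svec m a S)).card : ℝ) + (N:ℝ)/(2*Z)
        ≤ ((Tset x m N (svec m b S)).card : ℝ) := by
    intro N hPN
    have := key x hx Z m N hm hZ1 hPN.1 hPN.2
    rwa [← hS] at this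
  choose tN htN0 htN2Z htNkey using hkey
  set jf : ℕ → ℕ := fun N => if hPN : P N then ⌊tN N hPN / h⌋₊ + 1 else 0 with hjf
  set K : ℕ := ⌊2*(Z:ℝ)/h⌋₊ + 1 with hK
  have hjfK : ∀ N, P N → jf N < K + 1 := by
    intro N hPN
    simp only [hjf, dif_pos hPN]
    have h1 : tN N hPN / h ≤ 2*(Z:ℝ)/h :=
      div_le_div_of_nonneg_right (htN2Z N hPN) hhpos.le
    have h2 := Nat.floor_mono h1
    rw [hK]
    omega
  have hpig : ∃ j, ∃ᶠ N in atTop, P N ∧ jf N = j := by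
    by_contra hno
    push_neg at hno
    have hev : ∀ j, ∀ᶠ N in atTop, ¬(P N ∧ jf N = j) :=
      fun j => (hno j).mono (fun N hN hc => hN hc.1 hc.2)
    have hall : ∀ᶠ N in atTop, ∀ j ∈ Finset.range (K+1), ¬(P N ∧ jf N = j) :=
      (eventually_all_finset _).mpr (fun j _ => hev j)
    obtain ⟨N, hPN, hc⟩ := (hfreq.and_eventually hall).exists
    exact hc (jf N) (Finset.mem_range.mpr (hjfK N hPN)) ⟨hPN, rfl⟩
  obtain ⟨j, hjfreq⟩ := hpig
  have hj1 : 1 ≤ j := by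
    obtain ⟨N, hPN, hjN⟩ := hjfreq.exists
    simp only [hjf, dif_pos hPN] at hjN
    omega
  have hjR : (1:ℝ) ≤ j := by exact_mod_cast hj1
  have hbounds : ∀ N (hPN : P N), jf N = j →
      ((j:ℝ)-1)*h ≤ tN N hPN ∧ tN N hPN < j*h := by
    intro N hPN hjN
    simp only [hjf, dif_pos hPN] at hjN
    have hfl : ⌊tN N hPN / h⌋₊ = j - 1 := by omega
    have hcast : ((j-1:ℕ):ℝ) = (j:ℝ)-1 := by
      rw [Nat.cast_sub hj1]; norm_num
    constructor
    · have h1 : ((j:ℝ)-1) ≤ tN N hPN / h := by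
        have h2 := Nat.floor_le (div_nonneg (htN0 N hPN) hhpos.le)
        rw [hfl, hcast] at h2
        exact h2
      calc ((j:ℝ)-1)*h ≤ (tN N hPN / h)*h := mul_le_mul_of_nonneg_right h1 hhpos.le
      _ = tN N hPN := div_mul_cancel₀ _ (ne_of_gt hhpos)
    · have h2 : tN N hPN / h < ((j-1:ℕ):ℝ) + 1 := by
        rw [← hfl]; exact Nat.lt_floor_add_one _
      rw [hcast] at h2
      have h3 : tN N hPN / h < (j:ℝ) := by linarith
      calc tN N hPN = (tN N hPN / h) * h := (div_mul_cancel₀ _ (ne_of_gt hhpos)).symm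
      _ < j*h := mul_lt_mul_of_pos_right h3 hhpos
  have hRineq : ∀ (aa : ℝ), (∀ N (hPN : P N), jf N = j → aa < tN N hPN) →
      ∃ᶠ N in atTop, Rcorr x m 1 (svec m aa S) N + 1/(2*Z)
        ≤ Rcorr x m 1 (svec m ((j:ℝ)*h) S) N := by
    intro aa haa
    apply hjfreq.mono
    rintro N ⟨hPN, hjN⟩
    have hN1 : 1 ≤ N := le_trans (by rw [hM₀]; omega) hPN.1
    have hNR : (0:ℝ) < N := by exact_mod_cast hN1
    have hb : tN N hPN ≤ (j:ℝ)*h := (hbounds N hPN hjN).2.le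
    have hineq := htNkey N hPN aa ((j:ℝ)*h) (haa N hPN hjN) hb
    rw [Rcorr_one, Rcorr_one]
    have e : 1/(2*(Z:ℝ)) = ((N:ℝ)/(2*Z))/N := by field_simp
    rw [e, ← add_div]
    exact div_le_div_of_nonneg_right hineq hNR.le
  have hsvecpos : ∀ (c : ℝ), 0 < c → ∀ i, 0 < svec m c S i := by
    intro c hc i
    simp only [svec]
    split_ifs
    · exact hc
    · exact hSpos
  clear_value K jf
  have hjh_pos : (0:ℝ) < (j:ℝ)*h := by nlinarith
  have htb := H (svec m ((j:ℝ)*h) S) (hsvecpos _ hjh_pos)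
  rw [show (∏ i, 2 * svec m ((j:ℝ)*h) S i) = 2*((j:ℝ)*h)*C by rw [prod_svec, hC]] at htb
  by_cases hj2 : 2 ≤ j
  · have hjR2 : (2:ℝ) ≤ j := by exact_mod_cast hj2
    set aa : ℝ := ((j:ℝ)-1)*h - h/2 with haadef
    clear_value aa
    have haapos : 0 < aa := by rw [haadef]; nlinarith
    have hfr := hRineq aa (fun N hPN hjN => lt_of_lt_of_le (by rw [haadef]; linarith)
      (hbounds N hPN hjN).1)
    have hta := H (svec m aa S) (hsvecpos _ haapos)
    rw [show (∏ i, 2 * svec m aa S i) = 2*aa*C by rw [prod_svec, hC]] at hta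
    have hle := tendsto_freq_le hta htb hfr
    have harith : 2*((j:ℝ)*h)*C - 2*aa*C = 3*h*C := by rw [haadef]; ring
    have h3 : 3*h*C = 1/(4*Z) := by
      rw [hh]
      field_simp
      ring
    have h4 : 1/(4*(Z:ℝ)) < 1/(2*Z) := by
      rw [div_lt_div_iff₀ (by positivity) (by positivity)]
      nlinarith
    linarith
  · have hjeq : j = 1 := by omega
    have hfr := hRineq (-1) (fun N hPN _ => lt_of_lt_of_le (by norm_num) (htN0 N hPN))
    have hfr' : ∃ᶠ N in atTop, (0:ℝ) + 1/(2*Z) ≤ Rcorr x m 1 (svec m ((j:ℝ)*h) S) N := by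
      apply hfr.mono
      intro N hle
      have hpos : 0 ≤ Rcorr x m 1 (svec m (-1) S) N := by
        rw [Rcorr_one]; positivity
      linarith
    have hle : (0:ℝ) + 1/(2*Z) ≤ 2*((j:ℝ)*h)*C :=
      tendsto_freq_le (u := fun _ => (0:ℝ)) (L := 0) tendsto_const_nhds htb hfr'
    have h3 : 2*((j:ℝ)*h)*C = 1/(6*Z) := by
      rw [hjeq, hh]
      push_cast
      field_simp
      ring
    have h4 : 1/(6*(Z:ℝ)) < 1/(2*Z) := by
      rw [div_lt_div_iff₀ (by linarith) (by linarith)]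
      linarith
    linarith
end
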